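/- arXiv:1606.03563 — 4 statements merged into one kernel-verified Lean document; each statement's English description precedes it below -/
import Mathlib

section
/- Fix n ≥ 3, l ∈ {1,…,n+1}, and i < j in {1,…,n}. Then w_{ij}^l := w^p_{ij} ∘ ψ_l is a well-defined invariant on good-condition elements of G_{n+1}^2: if β and β′ are good-condition words in the generators of G_{n+1}^2 representing the same element of G_{n+1}^2, then w_{ij}^l(β) = w_{ij}^l(β′) in F_n^2. -/
namespace GnkBrunnian

/-! ## Index types for generators -/

/-- Validity of a pair index: `1 ≤ i < j ≤ n`. -/
abbrev P2ok (n : ℕ) (p : ℕ × ℕ) : Prop := 1 ≤ p.1 ∧ p.1 < p.2 ∧ p.2 ≤ n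

/-- Index type for the generators `a_{ij}` of `G_n^2` (and `b_{ij}` of `PB_n`). -/
abbrev PIdx (n : ℕ) := {p : ℕ × ℕ // P2ok n p}

/-- Validity of a triple index: `1 ≤ i < j < k ≤ n`. -/
abbrev T3ok (n : ℕ) (t : ℕ × ℕ × ℕ) : Prop :=
  1 ≤ t.1 ∧ t.1 < t.2.1 ∧ t.2.1 < t.2.2 ∧ t.2.2 ≤ n

/-- Index type for the generators `a_{ijk}` of `G_n^3`. -/
abbrev TIdx (n : ℕ) := {t : ℕ × ℕ × ℕ // T3ok n t}

def sort2 (a b : ℕ) : ℕ × ℕ := (min a b, max a b)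

def sort3 (a b c : ℕ) : ℕ × ℕ × ℕ :=
  (min a (min b c), a + b + c - min a (min b c) - max a (max b c), max a (max b c))

def pairSet {n : ℕ} (p : PIdx n) : Finset ℕ := {p.1.1, p.1.2}

def tripSet {n : ℕ} (t : TIdx n) : Finset ℕ := {t.1.1, t.1.2.1, t.1.2.2}

/-- Reindexing after deleting the strand `m` : indices above `m` are decreased by one. -/
def del (m x : ℕ) : ℕ := if m < x then x - 1 else x

/-! ## The group `G_n^2` -/

/-- The free-group letter `a_{\{a,b\}}` (trivial if the index is out of range). -/
def fgen2 (n a b : ℕ) : FreeGroup (PIdx n) :=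
  if h : P2ok n (sort2 a b) then FreeGroup.of ⟨sort2 a b, h⟩ else 1

/-- The defining relators of `G_n^2`. -/
def rels2 (n : ℕ) : Set (FreeGroup (PIdx n)) :=
  {r | ∃ a : PIdx n, r = .of a * .of a} ∪
  {r | ∃ i j k l : ℕ,
      1 ≤ i ∧ i ≤ n ∧ 1 ≤ j ∧ j ≤ n ∧ 1 ≤ k ∧ k ≤ n ∧ 1 ≤ l ∧ l ≤ n ∧
      i ≠ j ∧ i ≠ k ∧ i ≠ l ∧ j ≠ k ∧ j ≠ l ∧ k ≠ l ∧
      r = fgen2 n i j * fgen2 n k l * (fgen2 n i j)⁻¹ * (fgen2 n k l)⁻¹} ∪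
  {r | ∃ i j k : ℕ,
      1 ≤ i ∧ i ≤ n ∧ 1 ≤ j ∧ j ≤ n ∧ 1 ≤ k ∧ k ≤ n ∧ i ≠ j ∧ i ≠ k ∧ j ≠ k ∧
      r = fgen2 n i j * fgen2 n i k * fgen2 n j k *
          (fgen2 n j k * fgen2 n i k * fgen2 n i j)⁻¹}

/-- The group `G_n^2`. -/
abbrev G2 (n : ℕ) := PresentedGroup (rels2 n)

/-- The generator `a_{\{a,b\}}` of `G_n^2` (trivial if the index is out of range). -/
def ggen2 (n a b : ℕ) : G2 n :=
  if h : P2ok n (sort2 a b) then PresentedGroup.of ⟨sort2 a b, h⟩ else 1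

/-- The element of `G_n^2` represented by a word in the generators. -/
def toG2 {n : ℕ} (β : List (PIdx n)) : G2 n :=
  (β.map fun a => (PresentedGroup.of a : G2 n)).prod

/-! ## The group `G_n^3` -/

/-- The free-group letter `a_{\{a,b,c\}}` (trivial if the index is out of range). -/
def fgen3 (n a b c : ℕ) : FreeGroup (TIdx n) :=
  if h : T3ok n (sort3 a b c) then FreeGroup.of ⟨sort3 a b c, h⟩ else 1

/-- The defining relators of `G_n^3`. -/
def rels3 (n : ℕ) : Set (FreeGroup (TIdx n)) :=
  {r | ∃ a : TIdx n, r = .of a * .of a} ∪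
  {r | ∃ a b : TIdx n, (tripSet a ∩ tripSet b).card < 2 ∧
      r = .of a * .of b * (.of a)⁻¹ * (.of b)⁻¹} ∪
  {r | ∃ i j k l : ℕ,
      1 ≤ i ∧ i ≤ n ∧ 1 ≤ j ∧ j ≤ n ∧ 1 ≤ k ∧ k ≤ n ∧ 1 ≤ l ∧ l ≤ n ∧
      i ≠ j ∧ i ≠ k ∧ i ≠ l ∧ j ≠ k ∧ j ≠ l ∧ k ≠ l ∧
      r = fgen3 n i j k * fgen3 n i j l * fgen3 n i k l * fgen3 n j k l *
          (fgen3 n j k l * fgen3 n i k l * fgen3 n i j l * fgen3 n i j k)⁻¹}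

/-- The group `G_n^3`. -/
abbrev G3 (n : ℕ) := PresentedGroup (rels3 n)

/-- The generator `a_{\{a,b,c\}}` of `G_n^3` (trivial if the index is out of range). -/
def ggen3 (n a b c : ℕ) : G3 n :=
  if h : T3ok n (sort3 a b c) then PresentedGroup.of ⟨sort3 a b c, h⟩ else 1

/-- The element of `G_n^3` represented by a word in the generators. -/
def toG3 {n : ℕ} (β : List (TIdx n)) : G3 n :=
  (β.map fun a => (PresentedGroup.of a : G3 n)).prod

/-! ## The pure braid group `PB_n` (standard Artin/Birman presentation) -/

/-- The defining relators of the pure braid group on `n` strands, in the standard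
presentation on the generators `b_{ij} = A_{ij}`, `1 ≤ i < j ≤ n`. -/
def relsPB (n : ℕ) : Set (FreeGroup (PIdx n)) :=
  {x | ∃ r s i j : ℕ, P2ok n (r, s) ∧ P2ok n (i, j) ∧ (s < i ∨ (i < r ∧ s < j)) ∧
      x = (fgen2 n r s)⁻¹ * fgen2 n i j * fgen2 n r s * (fgen2 n i j)⁻¹} ∪
  {x | ∃ r s j : ℕ, 1 ≤ r ∧ r < s ∧ s < j ∧ j ≤ n ∧
      x = (fgen2 n r s)⁻¹ * fgen2 n s j * fgen2 n r s *
          (fgen2 n r j * fgen2 n s j * (fgen2 n r j)⁻¹)⁻¹} ∪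
  {x | ∃ r s j : ℕ, 1 ≤ r ∧ r < s ∧ s < j ∧ j ≤ n ∧
      x = (fgen2 n r s)⁻¹ * fgen2 n r j * fgen2 n r s *
          ((fgen2 n r j * fgen2 n s j) * fgen2 n r j * (fgen2 n r j * fgen2 n s j)⁻¹)⁻¹} ∪
  {x | ∃ r i s j : ℕ, 1 ≤ r ∧ r < i ∧ i < s ∧ s < j ∧ j ≤ n ∧
      x = (fgen2 n r s)⁻¹ * fgen2 n i j * fgen2 n r s *
          ((fgen2 n r j * fgen2 n s j * (fgen2 n r j)⁻¹ * (fgen2 n s j)⁻¹) * fgen2 n i j *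
           (fgen2 n r j * fgen2 n s j * (fgen2 n r j)⁻¹ * (fgen2 n s j)⁻¹)⁻¹)⁻¹}

/-- The pure braid group on `n` strands. -/
abbrev PB (n : ℕ) := PresentedGroup (relsPB n)

/-- The standard generator `b_{ij}` of `PB_n` (trivial if the index is out of range). -/
def pbgen (n a b : ℕ) : PB n :=
  if h : P2ok n (sort2 a b) then PresentedGroup.of ⟨sort2 a b, h⟩ else 1

/-! ## The elements `c^n_{i,j}` and the homomorphism `φ_n` -/

/-- `c^n_{i,j} = (∏_{k=j+1}^{n} a_{ijk}) * (∏_{k=1, k∉{i,j}}^{j-1} a_{ijk}) ∈ G_n^3`. -/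
def cElt (n i j : ℕ) : G3 n :=
  (((List.range' (j + 1) (n - j)).map fun k => ggen3 n i j k).prod) *
  (((List.range' 1 (j - 1)).map fun k => ggen3 n i j k).prod)

/-- The image of `b_{ij}` under `φ_n`:
`(c^n_{i,i+1})⁻¹ ⋯ (c^n_{i,j-1})⁻¹ (c^n_{i,j})² c^n_{i,j-1} ⋯ c^n_{i,i+1}`. -/
def phiElt (n i j : ℕ) : G3 n :=
  (((List.range' (i + 1) (j - 1 - i)).map fun m => (cElt n i m)⁻¹).prod) *
  (cElt n i j) ^ 2 *
  (((List.range' (i + 1) (j - 1 - i)).reverse.map fun m => cElt n i m).prod)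

/-- `q` is the strand-deletion homomorphism `q_m : G_n^3 → G_{n-1}^3`. -/
def IsShift3 (n m : ℕ) (q : G3 n →* G3 (n - 1)) : Prop :=
  ∀ i j k : ℕ, 1 ≤ i → i < j → j < k → k ≤ n →
    q (ggen3 n i j k) =
      if m = i ∨ m = j ∨ m = k then 1
      else ggen3 (n - 1) (del m i) (del m j) (del m k)

/-- `p` is the strand-deletion homomorphism `p_m : PB_n → PB_{n-1}`. -/
def IsShiftPB (n m : ℕ) (p : PB n →* PB (n - 1)) : Prop :=
  ∀ i j : ℕ, 1 ≤ i → i < j → j ≤ n →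
    p (pbgen n i j) =
      if m = i ∨ m = j then 1 else pbgen (n - 1) (del m i) (del m j)

/-- `φ` is the Manturov–Nikonov homomorphism `φ_n : PB_n → G_n^3`. -/
def IsPhi (n : ℕ) (φ : PB n →* G3 n) : Prop :=
  ∀ i j : ℕ, 1 ≤ i → i < j → j ≤ n → φ (pbgen n i j) = phiElt n i j

/-! ## Words and good condition -/

def good2 {n : ℕ} (β : List (PIdx n)) : Prop := ∀ a : PIdx n, Even (β.count a)

def good3 {n : ℕ} (β : List (TIdx n)) : Prop := ∀ a : TIdx n, Even (β.count a)

/-! ## Free products of copies of `ℤ/2` -/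

/-- The free product of copies of `ℤ/2ℤ` indexed by `ι`. -/
abbrev FP2 (ι : Type) := PresentedGroup {r : FreeGroup ι | ∃ a : ι, r = .of a * .of a}

/-- Indices `l ∈ {1,…,n} \ {i,j,k}`. -/
abbrev SIdx3 (n i j k : ℕ) := {l : ℕ // (1 ≤ l ∧ l ≤ n) ∧ l ≠ i ∧ l ≠ j ∧ l ≠ k}

/-- The group `F_n^3` (for the fixed triple `(i,j,k)`). -/
abbrev F3 (n i j k : ℕ) := FP2 (SIdx3 n i j k → ZMod 2 × ZMod 2)

/-- Indices `k ∈ {1,…,n} \ {i,j}`. -/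
abbrev SIdx2 (n i j : ℕ) := {l : ℕ // (1 ≤ l ∧ l ≤ n) ∧ l ≠ i ∧ l ≠ j}

/-- The group `F_n^2` (for the fixed pair `(i,j)`). -/
abbrev F2 (n i j : ℕ) := FP2 (SIdx2 n i j → ZMod 2)

/-! ## The MN-invariants `w_{(i,j)}` and `w_{(i,j,k)}` -/

/-- The number of occurrences of the generator `a_{\{a,b\}}` in a word over `G_n^2`. -/
def cnt2 {n : ℕ} (β : List (PIdx n)) (a b : ℕ) : ℕ :=
  (β.filter fun x => decide (pairSet x = ({a, b} : Finset ℕ))).length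

/-- The number of occurrences of the generator `a_{\{a,b,c\}}` in a word over `G_n^3`. -/
def cnt3 {n : ℕ} (β : List (TIdx n)) (a b c : ℕ) : ℕ :=
  (β.filter fun x => decide (tripSet x = ({a, b, c} : Finset ℕ))).length

/-- `i_c` for an occurrence of `a_{ij}` with prefix `pre`: `i_c(k) = N_{ik} + N_{jk} (mod 2)`. -/
def iC2 {n : ℕ} (i j : ℕ) (pre : List (PIdx n)) : SIdx2 n i j → ZMod 2 :=
  fun k => ((cnt2 pre i k.1 + cnt2 pre j k.1 : ℕ) : ZMod 2)

/-- The MN-invariant `w_{(i,j)}` of a word over `G_n^2`. -/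
def w2 {n : ℕ} (i j : ℕ) (β : List (PIdx n)) : F2 n i j :=
  (((β.zipIdx.map Prod.swap).filter fun x => decide (pairSet x.2 = ({i, j} : Finset ℕ))).map
    fun x => (PresentedGroup.of (iC2 i j (β.take x.1)) : F2 n i j)).prod

/-- `i_c` for an occurrence of `a_{ijk}` with prefix `pre`:
`i_c(l) = (N_{jkl} + N_{ijl}, N_{ikl} + N_{ijl}) (mod 2)`. -/
def iC3 {n : ℕ} (i j k : ℕ) (pre : List (TIdx n)) : SIdx3 n i j k → ZMod 2 × ZMod 2 :=
  fun l => (((cnt3 pre j k l.1 + cnt3 pre i j l.1 : ℕ) : ZMod 2),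
            ((cnt3 pre i k l.1 + cnt3 pre i j l.1 : ℕ) : ZMod 2))

/-- The MN-invariant `w_{(i,j,k)}` of a word over `G_n^3`. -/
def w3 {n : ℕ} (i j k : ℕ) (β : List (TIdx n)) : F3 n i j k :=
  (((β.zipIdx.map Prod.swap).filter fun x => decide (tripSet x.2 = ({i, j, k} : Finset ℕ))).map
    fun x => (PresentedGroup.of (iC3 i j k (β.take x.1)) : F3 n i j k)).prod

/-! ## Explicit words for `c^n_{i,j}` and `φ_n(b_{ij})` -/

def tripMkS (n a b c : ℕ) : Option (TIdx n) :=
  if h : T3ok n (sort3 a b c) then some ⟨sort3 a b c, h⟩ else none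

def pairMkS (n a b : ℕ) : Option (PIdx n) :=
  if h : P2ok n (sort2 a b) then some ⟨sort2 a b, h⟩ else none

/-- The defining word of `c^n_{i,j}`. -/
def cWord (n i j : ℕ) : List (TIdx n) :=
  ((List.range' (j + 1) (n - j)).filterMap fun k => tripMkS n i j k) ++
  ((List.range' 1 (j - 1)).filterMap fun k => tripMkS n i j k)

/-- The defining word of `φ_n(b_{ij})`, with the inverses of the `c`-words expanded using
`a⁻¹ = a` for generators (i.e. by reversing the words). -/
def phiWord (n i j : ℕ) : List (TIdx n) :=
  (((List.range' (i + 1) (j - 1 - i)).map fun m => (cWord n i m).reverse).flatten) ++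
  cWord n i j ++ cWord n i j ++
  (((List.range' (i + 1) (j - 1 - i)).reverse.map fun m => cWord n i m).flatten)

/-! ## The group `G_{n,p}^2` (parity) -/

/-- Index type for the generators `a_{ij}^ε` of `G_{n,p}^2`. -/
abbrev PPIdx (n : ℕ) := PIdx n × ZMod 2

def fgenP2 (n a b : ℕ) (e : ZMod 2) : FreeGroup (PPIdx n) :=
  if h : P2ok n (sort2 a b) then FreeGroup.of (⟨sort2 a b, h⟩, e) else 1

/-- The defining relators of `G_{n,p}^2`. -/
def relsP2 (n : ℕ) : Set (FreeGroup (PPIdx n)) :=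
  {r | ∃ a : PPIdx n, r = .of a * .of a} ∪
  {r | ∃ (i j k l : ℕ) (e e' : ZMod 2),
      1 ≤ i ∧ i ≤ n ∧ 1 ≤ j ∧ j ≤ n ∧ 1 ≤ k ∧ k ≤ n ∧ 1 ≤ l ∧ l ≤ n ∧
      i ≠ j ∧ i ≠ k ∧ i ≠ l ∧ j ≠ k ∧ j ≠ l ∧ k ≠ l ∧
      r = fgenP2 n i j e * fgenP2 n k l e' * (fgenP2 n i j e)⁻¹ * (fgenP2 n k l e')⁻¹} ∪
  {r | ∃ (i j k : ℕ) (e1 e2 e3 : ZMod 2),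
      1 ≤ i ∧ i < j ∧ j < k ∧ k ≤ n ∧ e1 + e2 + e3 = 0 ∧
      r = fgenP2 n i j e1 * fgenP2 n i k e2 * fgenP2 n j k e3 *
          (fgenP2 n j k e3 * fgenP2 n i k e2 * fgenP2 n i j e1)⁻¹}

/-- The group `G_{n,p}^2`. -/
abbrev GP2 (n : ℕ) := PresentedGroup (relsP2 n)

/-- The element of `G_{n,p}^2` represented by a word in the generators. -/
def toGP2 {n : ℕ} (β : List (PPIdx n)) : GP2 n :=
  (β.map fun a => (PresentedGroup.of a : GP2 n)).prod

/-! ## The parity invariant `w^p_{ij}` on `G_{n,p}^2` -/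

/-- The number of occurrences of `a_{\{a,b\}}^e` in a word over `G_{n,p}^2`. -/
def cntP2 {n : ℕ} (β : List (PPIdx n)) (a b : ℕ) (e : ZMod 2) : ℕ :=
  (β.filter fun x => decide (pairSet x.1 = ({a, b} : Finset ℕ) ∧ x.2 = e)).length

/-- `i^p_c` for an occurrence of `a_{ij}^e` with prefix `pre`. -/
def iCP2 {n : ℕ} (i j : ℕ) (e : ZMod 2) (pre : List (PPIdx n)) : SIdx2 n i j → ZMod 2 :=
  fun k =>
    if e = 0 then ((cntP2 pre i k.1 0 + cntP2 pre j k.1 0 : ℕ) : ZMod 2)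
    else ((cntP2 pre i k.1 0 + cntP2 pre j k.1 1 : ℕ) : ZMod 2)

/-- The invariant `w^p_{ij}` of a word over `G_{n,p}^2`. -/
def wP2 {n : ℕ} (i j : ℕ) (β : List (PPIdx n)) : F2 n i j :=
  (((β.zipIdx.map Prod.swap).filter fun x => decide (pairSet x.2.1 = ({i, j} : Finset ℕ))).map
    fun x => (PresentedGroup.of (iCP2 i j x.2.2 (β.take x.1)) : F2 n i j)).prod

/-! ## The map `ψ_l : G_{n+1}^2 → G_{n,p}^2` -/

/-- The word over `G_{n,p}^2` obtained from a word over `G_{n+1}^2` by deleting the strand `l`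
and recording parities. -/
def psiWord (n l : ℕ) (β : List (PIdx (n + 1))) : List (PPIdx n) :=
  (β.zipIdx.map Prod.swap).filterMap fun x =>
    if l = x.2.1.1 ∨ l = x.2.1.2 then none
    else (pairMkS n (del l x.2.1.1) (del l x.2.1.2)).map fun p =>
      (p, ((cnt2 (β.take x.1) x.2.1.1 l + cnt2 (β.take x.1) x.2.1.2 l : ℕ) : ZMod 2))

/-! ## The group `G_{n,p}^3` (parity) -/

/-- Index type for the generators `a_{ijk}^ε` of `G_{n,p}^3`. -/
abbrev TPIdx (n : ℕ) := TIdx n × ZMod 2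

def fgenP3 (n a b c : ℕ) (e : ZMod 2) : FreeGroup (TPIdx n) :=
  if h : T3ok n (sort3 a b c) then FreeGroup.of (⟨sort3 a b c, h⟩, e) else 1

/-- The defining relators of `G_{n,p}^3`. -/
def relsP3 (n : ℕ) : Set (FreeGroup (TPIdx n)) :=
  {r | ∃ a : TPIdx n, r = .of a * .of a} ∪
  {r | ∃ a b : TPIdx n, (tripSet a.1 ∩ tripSet b.1).card < 2 ∧
      r = (.of a * .of b) ^ 2} ∪
  {r | ∃ (i j k l : ℕ) (ei ej ek el : ZMod 2),
      1 ≤ i ∧ i ≤ n ∧ 1 ≤ j ∧ j ≤ n ∧ 1 ≤ k ∧ k ≤ n ∧ 1 ≤ l ∧ l ≤ n ∧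
      i ≠ j ∧ i ≠ k ∧ i ≠ l ∧ j ≠ k ∧ j ≠ l ∧ k ≠ l ∧
      (if max (max i j) (max k l) = i then ej + ek + el
       else if max (max i j) (max k l) = j then ei + ek + el
       else if max (max i j) (max k l) = k then ei + ej + el
       else ei + ej + ek) = 0 ∧
      r = (fgenP3 n i j k el * fgenP3 n i j l ek * fgenP3 n i k l ej * fgenP3 n j k l ei) ^ 2}

/-- The group `G_{n,p}^3`. -/
abbrev GP3 (n : ℕ) := PresentedGroup (relsP3 n)

/-- The element of `G_{n,p}^3` represented by a word in the generators. -/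
def toGP3 {n : ℕ} (β : List (TPIdx n)) : GP3 n :=
  (β.map fun a => (PresentedGroup.of a : GP3 n)).prod

/-! ## The map `f : G_{n+1}^3 → G_{n,p}^3` -/

/-- The word over `G_{n,p}^3` obtained from a word over `G_{n+1}^3` by deleting the letters
containing the index `n+1` and recording parities. -/
def fWord (n : ℕ) (β : List (TIdx (n + 1))) : List (TPIdx n) :=
  (β.zipIdx.map Prod.swap).filterMap fun x =>
    if x.2.1.2.2 = n + 1 then none
    else (tripMkS n x.2.1.1 x.2.1.2.1 x.2.1.2.2).map fun t =>
      (t, ((cnt3 (β.take x.1) x.2.1.2.1 x.2.1.2.2 (n + 1) +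
            cnt3 (β.take x.1) x.2.1.1 x.2.1.2.2 (n + 1) : ℕ) : ZMod 2))

/-! ## The parity invariant `w^p_{ijk}` on `G_{n,p}^3` -/

/-- The group `F_n^3` with values in `ℤ/2` (for the parity invariant). -/
abbrev F3p (n i j k : ℕ) := FP2 (SIdx3 n i j k → ZMod 2)

/-- The number of occurrences of `a_{\{a,b,c\}}^e` in a word over `G_{n,p}^3`. -/
def cntP3 {n : ℕ} (β : List (TPIdx n)) (a b c : ℕ) (e : ZMod 2) : ℕ :=
  (β.filter fun x => decide (tripSet x.1 = ({a, b, c} : Finset ℕ) ∧ x.2 = e)).length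

/-- `i^p_c` for an occurrence of `a_{ijk}^e` with prefix `pre` (here `k > i, j`). -/
def iCP3 {n : ℕ} (i j k : ℕ) (e : ZMod 2) (pre : List (TPIdx n)) : SIdx3 n i j k → ZMod 2 :=
  fun l =>
    if e = 0 then
      (if k < l.1 then
        ((cntP3 pre i k l.1 0 + cntP3 pre j k l.1 0 + cntP3 pre i j l.1 1 : ℕ) : ZMod 2)
      else ((cntP3 pre i k l.1 0 + cntP3 pre j k l.1 0 : ℕ) : ZMod 2))
    else
      (if k < l.1 then
        ((cntP3 pre i k l.1 0 + cntP3 pre j k l.1 1 + cntP3 pre i j l.1 0 : ℕ) : ZMod 2)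
      else ((cntP3 pre i k l.1 0 + cntP3 pre j k l.1 1 : ℕ) : ZMod 2))

/-- The invariant `w^p_{ijk}` of a word over `G_{n,p}^3`. -/
def wP3 {n : ℕ} (i j k : ℕ) (β : List (TPIdx n)) : F3p n i j k :=
  (((β.zipIdx.map Prod.swap).filter fun x => decide (tripSet x.2.1 = ({i, j, k} : Finset ℕ))).map
    fun x => (PresentedGroup.of (iCP3 i j k x.2.2 (β.take x.1)) : F3p n i j k)).prod

/-! ## Auxiliary development for statement_12 -/

section MNAux

lemma pair_eq_pair_iff' {a b c d : ℕ} :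
    ({a, b} : Finset ℕ) = {c, d} ↔ (a = c ∧ b = d) ∨ (a = d ∧ b = c) := by
  constructor
  · intro h
    have h1 := Finset.ext_iff.mp h a
    have h2 := Finset.ext_iff.mp h b
    have h3 := Finset.ext_iff.mp h c
    have h4 := Finset.ext_iff.mp h d
    simp at h1 h2 h3 h4
    omega
  · rintro (⟨rfl, rfl⟩ | ⟨rfl, rfl⟩)
    · rfl
    · exact Finset.pair_comm _ _

lemma mem_pair' {x a b : ℕ} : x ∈ ({a, b} : Finset ℕ) ↔ x = a ∨ x = b := by simp

/-- The inverse of `del l` on indices different from `l`. -/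
def lft (l x : ℕ) : ℕ := if l ≤ x then x + 1 else x

lemma lft_del {l x : ℕ} (h : l ≠ x) : lft l (del l x) = x := by
  unfold lft del; split_ifs <;> omega

lemma del_lft (l x : ℕ) : del l (lft l x) = x := by
  unfold lft del; split_ifs <;> omega

lemma lft_ne (l x : ℕ) : lft l x ≠ l := by
  unfold lft; split_ifs <;> omega

lemma lft_inj {l x y : ℕ} (h : lft l x = lft l y) : x = y := by
  unfold lft at h; split_ifs at h <;> omega

lemma del_inj {l x y : ℕ} (hx : l ≠ x) (hy : l ≠ y) (h : del l x = del l y) : x = y := by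
  unfold del at h; split_ifs at h <;> omega

lemma zmod2_cases (e : ZMod 2) : e = 0 ∨ e = 1 := by revert e; decide

lemma zmod2_add_self (u v : ZMod 2) : u + v + v = u := by revert u v; decide

lemma bracket_add {u w : ZMod 2} (h : u + w = 0) :
    (if u = 0 then (1 : ZMod 2) else 0) + (if w = 0 then 1 else 0) = 0 := by
  revert h; revert u w; decide

lemma bracket_add' {u w : ZMod 2} (h : u + w = 1) :
    (if u = 0 then (1 : ZMod 2) else 0) + (if w = 0 then 1 else 0) = 1 := by
  revert h; revert u w; decide

/-- `a * a = 1` in a free product of copies of `ℤ/2`. -/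
lemma FP2_of_sq {ι : Type} (a : ι) :
    (PresentedGroup.of a : FP2 ι) * PresentedGroup.of a = 1 := by
  have h : (FreeGroup.of a * FreeGroup.of a) ∈
      Subgroup.normalClosure {r : FreeGroup ι | ∃ b : ι, r = .of b * .of b} :=
    Subgroup.subset_normalClosure ⟨a, rfl⟩
  show (QuotientGroup.mk (FreeGroup.of a) : PresentedGroup _) * QuotientGroup.mk (FreeGroup.of a) = 1
  show ((FreeGroup.of a * FreeGroup.of a : FreeGroup ι) : FreeGroup ι ⧸ Subgroup.normalClosure {r : FreeGroup ι | ∃ b : ι, r = .of b * .of b}) = 1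
  exact (QuotientGroup.eq_one_iff _).mpr h

/-! ### The state space and the wreath-type group -/

/-- The state: parity of the number of occurrences of each generator (as a pair-set),
and parity of the number of `ε = 0` occurrences in the `ψ_l`-image, keyed by the
original pair-set. -/
abbrev StMN : Type := (Finset ℕ → ZMod 2) × (Finset ℕ → ZMod 2)

/-- Initial state. -/
def s0MN : StMN := (fun _ => 0, fun _ => 0)

/-- Wreath-type group: value cocycle together with a state permutation. -/
@[ext] structure WrMN (G : Type) : Type where
  v : StMN → G
  p : Equiv.Perm StMN

namespace WrMN

variable {G : Type} [Group G]

instance : Mul (WrMN G) := ⟨fun a b => ⟨fun s => a.v s * b.v (a.p s), a.p.trans b.p⟩⟩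
instance : One (WrMN G) := ⟨⟨fun _ => 1, Equiv.refl _⟩⟩
instance : Inv (WrMN G) := ⟨fun a => ⟨fun s => (a.v (a.p.symm s))⁻¹, a.p.symm⟩⟩

@[simp] lemma mul_v (a b : WrMN G) (s : StMN) : (a * b).v s = a.v s * b.v (a.p s) := rfl
@[simp] lemma mul_p (a b : WrMN G) (s : StMN) : (a * b).p s = b.p (a.p s) := rfl
@[simp] lemma one_v (s : StMN) : (1 : WrMN G).v s = 1 := rfl
@[simp] lemma one_p (s : StMN) : (1 : WrMN G).p s = s := rfl
@[simp] lemma inv_v (a : WrMN G) (s : StMN) : (a⁻¹).v s = (a.v (a.p.symm s))⁻¹ := rfl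
@[simp] lemma inv_p (a : WrMN G) (s : StMN) : (a⁻¹).p s = a.p.symm s := rfl

lemma ext'' {a b : WrMN G} (hv : ∀ s, a.v s = b.v s) (hp : ∀ s, a.p s = b.p s) : a = b := by
  obtain ⟨av, ap⟩ := a
  obtain ⟨bv, bp⟩ := b
  congr 1
  · exact funext hv
  · exact Equiv.ext hp

instance : Group (WrMN G) where
  mul_assoc a b c := by
    refine ext'' (fun s => ?_) (fun s => ?_) <;> simp [mul_assoc]
  one_mul a := by refine ext'' (fun s => ?_) (fun s => ?_) <;> simp
  mul_one a := by refine ext'' (fun s => ?_) (fun s => ?_) <;> simp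
  inv_mul_cancel a := by
    refine ext'' (fun s => ?_) (fun s => ?_) <;> simp

end WrMN

end MNAux
section MNCore

set_option linter.unusedSectionVars false

/-- `ε` of a (potential) occurrence of the pair `{x,y}`, read off the count-parity state. -/
def epsMN (l x y : ℕ) (c : Finset ℕ → ZMod 2) : ZMod 2 := c {x, l} + c {y, l}

lemma epsMN_comm_args (l x y : ℕ) (c : Finset ℕ → ZMod 2) :
    epsMN l x y c = epsMN l y x c := by
  unfold epsMN; ring

/-- State update caused by one occurrence of the pair `{x,y}`. -/
def updMN (l x y : ℕ) (s : StMN) : StMN :=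
  (fun q => s.1 q + if q = ({x, y} : Finset ℕ) then 1 else 0,
   fun q => s.2 q +
     if q = ({x, y} : Finset ℕ) ∧ l ∉ ({x, y} : Finset ℕ) ∧ epsMN l x y s.1 = 0 then 1 else 0)

lemma updMN_fst (l x y : ℕ) (s : StMN) (q : Finset ℕ) :
    (updMN l x y s).1 q = s.1 q + if q = ({x, y} : Finset ℕ) then 1 else 0 := rfl

lemma updMN_snd (l x y : ℕ) (s : StMN) (q : Finset ℕ) :
    (updMN l x y s).2 q = s.2 q +
      if q = ({x, y} : Finset ℕ) ∧ l ∉ ({x, y} : Finset ℕ) ∧ epsMN l x y s.1 = 0 then 1 else 0 :=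
  rfl

lemma updMN_comm_args (l x y : ℕ) : updMN l x y = updMN l y x := by
  funext s
  unfold updMN
  rw [Finset.pair_comm x y, epsMN_comm_args]

lemma epsMN_updMN (l x y u w : ℕ) (s : StMN) :
    epsMN l x y (updMN l u w s).1 = epsMN l x y s.1
      + (if ({x, l} : Finset ℕ) = {u, w} then 1 else 0)
      + (if ({y, l} : Finset ℕ) = {u, w} then 1 else 0) := by
  unfold epsMN updMN
  ring

lemma updMN_invol (l x y : ℕ) : Function.Involutive (updMN l x y) := by
  intro s
  have heps : (updMN l x y s).1 {x, l} = s.1 {x, l} ∧ (updMN l x y s).1 {y, l} = s.1 {y, l} ∨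
      l ∈ ({x, y} : Finset ℕ) := by
    by_cases hl : l ∈ ({x, y} : Finset ℕ)
    · exact Or.inr hl
    · refine Or.inl ⟨?_, ?_⟩ <;> rw [updMN_fst, if_neg, add_zero]
      · intro hq; exact hl (hq ▸ (by simp : l ∈ ({x, l} : Finset ℕ)))
      · intro hq; exact hl (hq ▸ (by simp : l ∈ ({y, l} : Finset ℕ)))
  refine Prod.ext ?_ ?_
  · funext q
    show (updMN l x y s).1 q + _ = _
    rw [updMN_fst]
    exact zmod2_add_self _ _
  · funext q
    show (updMN l x y s).2 q + (if q = ({x, y} : Finset ℕ) ∧ l ∉ ({x, y} : Finset ℕ) ∧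
        epsMN l x y (updMN l x y s).1 = 0 then 1 else 0) = s.2 q
    rw [updMN_snd]
    rcases heps with ⟨h1, h2⟩ | hl
    · have : epsMN l x y (updMN l x y s).1 = epsMN l x y s.1 := by
        unfold epsMN; rw [h1, h2]
      rw [this]
      exact zmod2_add_self _ _
    · rw [if_neg (by tauto), if_neg (by tauto), add_zero, add_zero]

variable (n l i j : ℕ)

/-- The value cocycle of one occurrence of the pair `{x,y}`. -/
def vMN (x y : ℕ) (s : StMN) : F2 n i j :=
  if l ∈ ({x, y} : Finset ℕ) then 1
  else if ({del l x, del l y} : Finset ℕ) = ({i, j} : Finset ℕ) then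
    PresentedGroup.of (fun k : SIdx2 n i j =>
      if epsMN l x y s.1 = 0 then
        s.2 {lft l i, lft l k.1} + s.2 {lft l j, lft l k.1}
      else
        s.2 {lft l i, lft l k.1} + (s.1 {lft l j, lft l k.1} + s.2 {lft l j, lft l k.1}))
  else 1

lemma vMN_comm_args (x y : ℕ) : vMN n l i j x y = vMN n l i j y x := by
  funext s
  unfold vMN
  rw [Finset.pair_comm x y, Finset.pair_comm (del l x) (del l y), epsMN_comm_args]

lemma vMN_of_mem (x y : ℕ) (hl : l ∈ ({x, y} : Finset ℕ)) (s : StMN) :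
    vMN n l i j x y s = 1 := by
  unfold vMN; rw [if_pos hl]

lemma vMN_of_img (x y : ℕ) (hl : ({del l x, del l y} : Finset ℕ) ≠ {i, j}) (s : StMN) :
    vMN n l i j x y s = 1 := by
  unfold vMN
  by_cases h : l ∈ ({x, y} : Finset ℕ)
  · rw [if_pos h]
  · rw [if_neg h, if_neg hl]

lemma vMN_sq (x y : ℕ) (s t : StMN) (hst : vMN n l i j x y s = vMN n l i j x y t) :
    vMN n l i j x y s * vMN n l i j x y t = 1 := by
  rw [← hst]
  unfold vMN
  split_ifs <;> first | exact one_mul 1 | exact FP2_of_sq _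

/-- The image in the wreath-type group of the generator with pair `{x,y}`. -/
def genMN (x y : ℕ) : WrMN (F2 n i j) :=
  ⟨vMN n l i j x y, (updMN_invol l x y).toPerm⟩

@[simp] lemma genMN_v (x y : ℕ) (s : StMN) : (genMN n l i j x y).v s = vMN n l i j x y s := rfl

@[simp] lemma genMN_p (x y : ℕ) (s : StMN) : (genMN n l i j x y).p s = updMN l x y s := rfl

lemma genMN_comm_args (x y : ℕ) : genMN n l i j x y = genMN n l i j y x := by
  unfold genMN
  congr 1
  · exact vMN_comm_args n l i j x y
  · exact Equiv.ext fun s => by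
      show updMN l x y s = updMN l y x s
      rw [updMN_comm_args]

end MNCore
section MNRel

set_option linter.unusedSectionVars false

variable (n l i j : ℕ)

lemma vMN_eq_of {x y : ℕ} {s t : StMN}
    (H : l ∉ ({x, y} : Finset ℕ) → ({del l x, del l y} : Finset ℕ) = {i, j} →
      epsMN l x y s.1 = epsMN l x y t.1 ∧
      ∀ k : SIdx2 n i j,
        s.1 {lft l j, lft l k.1} = t.1 {lft l j, lft l k.1} ∧
        s.2 {lft l i, lft l k.1} = t.2 {lft l i, lft l k.1} ∧
        s.2 {lft l j, lft l k.1} = t.2 {lft l j, lft l k.1}) :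
    vMN n l i j x y s = vMN n l i j x y t := by
  unfold vMN
  by_cases hl : l ∈ ({x, y} : Finset ℕ)
  · rw [if_pos hl, if_pos hl]
  rw [if_neg hl, if_neg hl]
  by_cases himg : ({del l x, del l y} : Finset ℕ) = ({i, j} : Finset ℕ)
  · rw [if_pos himg, if_pos himg]
    obtain ⟨he, hk⟩ := H hl himg
    congr 1
    funext k
    rw [he, (hk k).1, (hk k).2.1, (hk k).2.2]
  · rw [if_neg himg, if_neg himg]

lemma pair_eq_lft {x y : ℕ} (hl : l ∉ ({x, y} : Finset ℕ))
    (himg : ({del l x, del l y} : Finset ℕ) = {i, j}) :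
    x = lft l i ∧ y = lft l j ∨ x = lft l j ∧ y = lft l i := by
  have hx : l ≠ x := fun h => hl (by simp [h])
  have hy : l ≠ y := fun h => hl (by simp [h])
  rcases pair_eq_pair_iff'.mp himg with ⟨h1, h2⟩ | ⟨h1, h2⟩
  · exact Or.inl ⟨by rw [← h1, lft_del hx], by rw [← h2, lft_del hy]⟩
  · exact Or.inr ⟨by rw [← h1, lft_del hx], by rw [← h2, lft_del hy]⟩

lemma readi_ne (hij' : i ≠ j) (k : SIdx2 n i j) :
    ({lft l i, lft l k.1} : Finset ℕ) ≠ {lft l i, lft l j} := by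
  intro h
  rcases pair_eq_pair_iff'.mp h with ⟨h1, h2⟩ | ⟨h1, h2⟩
  · exact k.2.2.2 (lft_inj h2)
  · exact hij' (lft_inj h1)

lemma readj_ne (hij' : i ≠ j) (k : SIdx2 n i j) :
    ({lft l j, lft l k.1} : Finset ℕ) ≠ {lft l i, lft l j} := by
  intro h
  rcases pair_eq_pair_iff'.mp h with ⟨h1, h2⟩ | ⟨h1, h2⟩
  · exact hij' (lft_inj h1).symm
  · exact k.2.2.1 (lft_inj h2)

/-- Relator family 1: each generator squares to `1`. -/
lemma genMN_sq (hij' : i ≠ j) (x y : ℕ) :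
    genMN n l i j x y * genMN n l i j x y = 1 := by
  refine WrMN.ext'' (fun s => ?_) (fun s => ?_)
  · show vMN n l i j x y s * vMN n l i j x y (updMN l x y s) = 1
    refine vMN_sq n l i j x y s (updMN l x y s) ?_
    refine vMN_eq_of n l i j ?_
    intro hl himg
    have hxy : ({x, y} : Finset ℕ) = {lft l i, lft l j} := by
      rcases pair_eq_lft l i j hl himg with ⟨h1, h2⟩ | ⟨h1, h2⟩
      · rw [h1, h2]
      · rw [h1, h2]; exact Finset.pair_comm _ _
    refine ⟨?_, fun k => ⟨?_, ?_, ?_⟩⟩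
    · rw [epsMN_updMN, if_neg (fun hq => hl (by rw [← hq]; simp)),
        if_neg (fun hq => hl (by rw [← hq]; simp)), add_zero, add_zero]
    · rw [updMN_fst, if_neg (by rw [hxy]; exact readj_ne n l i j hij' k), add_zero]
    · rw [updMN_snd, if_neg (by
        intro hc
        exact (readi_ne n l i j hij' k) (hc.1.trans hxy)), add_zero]
    · rw [updMN_snd, if_neg (by
        intro hc
        exact (readj_ne n l i j hij' k) (hc.1.trans hxy)), add_zero]
  · show updMN l x y (updMN l x y s) = s
    exact updMN_invol l x y s

/-- Relator family 2: generators with disjoint pairs commute. -/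
lemma genMN_comm (hij' : i ≠ j) (x y u w : ℕ)
    (d1 : x ≠ u) (d2 : x ≠ w) (d3 : y ≠ u) (d4 : y ≠ w) :
    genMN n l i j x y * genMN n l i j u w = genMN n l i j u w * genMN n l i j x y := by
  have hepsA : ∀ s : StMN, epsMN l x y (updMN l u w s).1 = epsMN l x y s.1 := by
    intro s
    rw [epsMN_updMN, if_neg, if_neg, add_zero, add_zero]
    · intro hq; rcases pair_eq_pair_iff'.mp hq with ⟨e1, e2⟩ | ⟨e1, e2⟩ <;> omega
    · intro hq; rcases pair_eq_pair_iff'.mp hq with ⟨e1, e2⟩ | ⟨e1, e2⟩ <;> omega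
  have hepsB : ∀ s : StMN, epsMN l u w (updMN l x y s).1 = epsMN l u w s.1 := by
    intro s
    rw [epsMN_updMN, if_neg, if_neg, add_zero, add_zero]
    · intro hq; rcases pair_eq_pair_iff'.mp hq with ⟨e1, e2⟩ | ⟨e1, e2⟩ <;> omega
    · intro hq; rcases pair_eq_pair_iff'.mp hq with ⟨e1, e2⟩ | ⟨e1, e2⟩ <;> omega
  refine WrMN.ext'' (fun s => ?_) (fun s => ?_)
  · show vMN n l i j x y s * vMN n l i j u w (updMN l x y s)
      = vMN n l i j u w s * vMN n l i j x y (updMN l u w s)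
    have hA : vMN n l i j u w (updMN l x y s) = vMN n l i j u w s := by
      refine vMN_eq_of n l i j ?_
      intro hl himg
      refine ⟨hepsB s, fun k => ⟨?_, ?_, ?_⟩⟩ <;>
        rcases pair_eq_lft l i j hl himg with ⟨e1, e2⟩ | ⟨e1, e2⟩
      · rw [updMN_fst, if_neg (fun hq => by
          rcases pair_eq_pair_iff'.mp hq with ⟨f1, f2⟩ | ⟨f1, f2⟩ <;> omega), add_zero]
      · rw [updMN_fst, if_neg (fun hq => by
          rcases pair_eq_pair_iff'.mp hq with ⟨f1, f2⟩ | ⟨f1, f2⟩ <;> omega), add_zero]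
      · rw [updMN_snd, if_neg (fun hc => by
          rcases pair_eq_pair_iff'.mp hc.1 with ⟨f1, f2⟩ | ⟨f1, f2⟩ <;> omega), add_zero]
      · rw [updMN_snd, if_neg (fun hc => by
          rcases pair_eq_pair_iff'.mp hc.1 with ⟨f1, f2⟩ | ⟨f1, f2⟩ <;> omega), add_zero]
      · rw [updMN_snd, if_neg (fun hc => by
          rcases pair_eq_pair_iff'.mp hc.1 with ⟨f1, f2⟩ | ⟨f1, f2⟩ <;> omega), add_zero]
      · rw [updMN_snd, if_neg (fun hc => by
          rcases pair_eq_pair_iff'.mp hc.1 with ⟨f1, f2⟩ | ⟨f1, f2⟩ <;> omega), add_zero]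
    have hB : vMN n l i j x y (updMN l u w s) = vMN n l i j x y s := by
      refine vMN_eq_of n l i j ?_
      intro hl himg
      refine ⟨hepsA s, fun k => ⟨?_, ?_, ?_⟩⟩ <;>
        rcases pair_eq_lft l i j hl himg with ⟨e1, e2⟩ | ⟨e1, e2⟩
      · rw [updMN_fst, if_neg (fun hq => by
          rcases pair_eq_pair_iff'.mp hq with ⟨f1, f2⟩ | ⟨f1, f2⟩ <;> omega), add_zero]
      · rw [updMN_fst, if_neg (fun hq => by
          rcases pair_eq_pair_iff'.mp hq with ⟨f1, f2⟩ | ⟨f1, f2⟩ <;> omega), add_zero]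
      · rw [updMN_snd, if_neg (fun hc => by
          rcases pair_eq_pair_iff'.mp hc.1 with ⟨f1, f2⟩ | ⟨f1, f2⟩ <;> omega), add_zero]
      · rw [updMN_snd, if_neg (fun hc => by
          rcases pair_eq_pair_iff'.mp hc.1 with ⟨f1, f2⟩ | ⟨f1, f2⟩ <;> omega), add_zero]
      · rw [updMN_snd, if_neg (fun hc => by
          rcases pair_eq_pair_iff'.mp hc.1 with ⟨f1, f2⟩ | ⟨f1, f2⟩ <;> omega), add_zero]
      · rw [updMN_snd, if_neg (fun hc => by
          rcases pair_eq_pair_iff'.mp hc.1 with ⟨f1, f2⟩ | ⟨f1, f2⟩ <;> omega), add_zero]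
    rw [hA, hB]
    by_cases c1 : l ∈ ({x, y} : Finset ℕ)
    · rw [vMN_of_mem n l i j x y c1]; rw [one_mul, mul_one]
    by_cases c2 : l ∈ ({u, w} : Finset ℕ)
    · rw [vMN_of_mem n l i j u w c2]; rw [one_mul, mul_one]
    by_cases c3 : ({del l x, del l y} : Finset ℕ) = {i, j}
    · by_cases c4 : ({del l u, del l w} : Finset ℕ) = {i, j}
      · exfalso
        rcases pair_eq_lft l i j c1 c3 with ⟨e1, e2⟩ | ⟨e1, e2⟩ <;>
          rcases pair_eq_lft l i j c2 c4 with ⟨f1, f2⟩ | ⟨f1, f2⟩ <;> omega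
      · rw [vMN_of_img n l i j u w c4]; rw [one_mul, mul_one]
    · rw [vMN_of_img n l i j x y c3]; rw [one_mul, mul_one]
  · show updMN l u w (updMN l x y s) = updMN l x y (updMN l u w s)
    refine Prod.ext ?_ ?_
    · funext q
      rw [updMN_fst, updMN_fst, updMN_fst, updMN_fst]
      ring
    · funext q
      rw [updMN_snd, updMN_snd, updMN_snd, updMN_snd, hepsA s, hepsB s]
      ring
end MNRel
section MNEps

lemma epsE1 (l x y z : ℕ) (hxy : x ≠ y) (hxz : x ≠ z) (hyz : y ≠ z) (s : StMN) :
    epsMN l x y (updMN l x z (updMN l y z s)).1 = epsMN l x y s.1 := by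
  rw [epsMN_updMN, epsMN_updMN]
  have h1 : (if ({y, l} : Finset ℕ) = {x, z} then (1 : ZMod 2) else 0) = 0 :=
    if_neg (fun hq => by rcases pair_eq_pair_iff'.mp hq with ⟨f1, f2⟩ | ⟨f1, f2⟩ <;> omega)
  have h2 : (if ({x, l} : Finset ℕ) = {y, z} then (1 : ZMod 2) else 0) = 0 :=
    if_neg (fun hq => by rcases pair_eq_pair_iff'.mp hq with ⟨f1, f2⟩ | ⟨f1, f2⟩ <;> omega)
  have h3 : (if ({x, l} : Finset ℕ) = {x, z} then (1 : ZMod 2) else 0)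
      = (if ({y, l} : Finset ℕ) = {y, z} then (1 : ZMod 2) else 0) := by
    by_cases hlz : l = z
    · rw [if_pos (by rw [hlz]), if_pos (by rw [hlz])]
    · rw [if_neg (fun hq => by rcases pair_eq_pair_iff'.mp hq with ⟨f1, f2⟩ | ⟨f1, f2⟩ <;> omega),
        if_neg (fun hq => by rcases pair_eq_pair_iff'.mp hq with ⟨f1, f2⟩ | ⟨f1, f2⟩ <;> omega)]
  rw [h1, h2, h3, add_zero, add_zero]
  exact zmod2_add_self _ _

lemma epsE1' (l x y z : ℕ) (hxy : x ≠ y) (hxz : x ≠ z) (hyz : y ≠ z) (s : StMN) :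
    epsMN l y z (updMN l x z (updMN l x y s)).1 = epsMN l y z s.1 := by
  rw [epsMN_updMN, epsMN_updMN]
  have h1 : (if ({y, l} : Finset ℕ) = {x, z} then (1 : ZMod 2) else 0) = 0 :=
    if_neg (fun hq => by rcases pair_eq_pair_iff'.mp hq with ⟨f1, f2⟩ | ⟨f1, f2⟩ <;> omega)
  have h2 : (if ({z, l} : Finset ℕ) = {x, y} then (1 : ZMod 2) else 0) = 0 :=
    if_neg (fun hq => by rcases pair_eq_pair_iff'.mp hq with ⟨f1, f2⟩ | ⟨f1, f2⟩ <;> omega)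
  have h3 : (if ({y, l} : Finset ℕ) = {x, y} then (1 : ZMod 2) else 0)
      = (if ({z, l} : Finset ℕ) = {x, z} then (1 : ZMod 2) else 0) := by
    by_cases hlx : l = x
    · rw [if_pos (by rw [hlx]; exact Finset.pair_comm _ _),
        if_pos (by rw [hlx]; exact Finset.pair_comm _ _)]
    · rw [if_neg (fun hq => by rcases pair_eq_pair_iff'.mp hq with ⟨f1, f2⟩ | ⟨f1, f2⟩ <;> omega),
        if_neg (fun hq => by rcases pair_eq_pair_iff'.mp hq with ⟨f1, f2⟩ | ⟨f1, f2⟩ <;> omega)]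
  rw [h1, h2, h3]
  have h2' : (2 : ZMod 2) = 0 := by decide
  linear_combination (if ({z, l} : Finset ℕ) = {x, z} then (1 : ZMod 2) else 0) * h2'

lemma epsE2 (l x y z : ℕ) (hxy : x ≠ y) (hxz : x ≠ z) (hyz : y ≠ z) (s : StMN) :
    epsMN l x z (updMN l x y s).1 = epsMN l x z (updMN l y z s).1 := by
  rw [epsMN_updMN, epsMN_updMN]
  have h1 : (if ({z, l} : Finset ℕ) = {x, y} then (1 : ZMod 2) else 0) = 0 :=
    if_neg (fun hq => by rcases pair_eq_pair_iff'.mp hq with ⟨f1, f2⟩ | ⟨f1, f2⟩ <;> omega)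
  have h2 : (if ({x, l} : Finset ℕ) = {y, z} then (1 : ZMod 2) else 0) = 0 :=
    if_neg (fun hq => by rcases pair_eq_pair_iff'.mp hq with ⟨f1, f2⟩ | ⟨f1, f2⟩ <;> omega)
  have h3 : (if ({x, l} : Finset ℕ) = {x, y} then (1 : ZMod 2) else 0)
      = (if ({z, l} : Finset ℕ) = {y, z} then (1 : ZMod 2) else 0) := by
    by_cases hly : l = y
    · rw [if_pos (by rw [hly]), if_pos (by rw [hly]; exact Finset.pair_comm _ _)]
    · rw [if_neg (fun hq => by rcases pair_eq_pair_iff'.mp hq with ⟨f1, f2⟩ | ⟨f1, f2⟩ <;> omega),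
        if_neg (fun hq => by rcases pair_eq_pair_iff'.mp hq with ⟨f1, f2⟩ | ⟨f1, f2⟩ <;> omega)]
  rw [h1, h2, h3]
  ring

lemma epsMN_add (l x y z : ℕ) (c : Finset ℕ → ZMod 2) :
    epsMN l x z c + epsMN l y z c = epsMN l x y c := by
  unfold epsMN
  have h2 : (2 : ZMod 2) = 0 := by decide
  linear_combination c {z, l} * h2

end MNEps
section MNRead

lemma updMN_fst_ne (l x y : ℕ) (s : StMN) {q : Finset ℕ} (h : q ≠ ({x, y} : Finset ℕ)) :
    (updMN l x y s).1 q = s.1 q := by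
  rw [updMN_fst, if_neg h, add_zero]

lemma updMN_fst_hit (l x y : ℕ) (s : StMN) {q : Finset ℕ} (h : q = ({x, y} : Finset ℕ)) :
    (updMN l x y s).1 q = s.1 q + 1 := by
  rw [updMN_fst, if_pos h]

lemma updMN_snd_ne (l x y : ℕ) (s : StMN) {q : Finset ℕ} (h : q ≠ ({x, y} : Finset ℕ)) :
    (updMN l x y s).2 q = s.2 q := by
  rw [updMN_snd, if_neg (fun hc => h hc.1), add_zero]

lemma updMN_snd_lmem (l x y : ℕ) (s : StMN) (h : l ∈ ({x, y} : Finset ℕ)) (q : Finset ℕ) :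
    (updMN l x y s).2 q = s.2 q := by
  rw [updMN_snd, if_neg (fun hc => hc.2.1 h), add_zero]

lemma updMN_snd_hit (l x y : ℕ) (s : StMN) {q : Finset ℕ} (hq : q = ({x, y} : Finset ℕ))
    (hl : l ∉ ({x, y} : Finset ℕ)) :
    (updMN l x y s).2 q = s.2 q + if epsMN l x y s.1 = 0 then 1 else 0 := by
  rw [updMN_snd]
  by_cases he : epsMN l x y s.1 = 0
  · rw [if_pos ⟨hq, hl, he⟩, if_pos he]
  · rw [if_neg (fun hc => he hc.2.2), if_neg he, add_zero]

end MNRead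

section MNV

set_option linter.unusedSectionVars false

variable (n l i j : ℕ)

lemma vMN_V13 (hij' : i ≠ j) (x y z : ℕ) (hxy : x ≠ y) (hxz : x ≠ z) (hyz : y ≠ z) (s : StMN) :
    vMN n l i j x y (updMN l x z (updMN l y z s)) = vMN n l i j x y s := by
  unfold vMN
  by_cases hl : l ∈ ({x, y} : Finset ℕ)
  · rw [if_pos hl, if_pos hl]
  rw [if_neg hl, if_neg hl]
  by_cases himg : ({del l x, del l y} : Finset ℕ) = ({i, j} : Finset ℕ)
  swap
  · rw [if_neg himg, if_neg himg]
  rw [if_pos himg, if_pos himg]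
  have hlx : l ≠ x := fun h => hl (by simp [h])
  have hly : l ≠ y := fun h => hl (by simp [h])
  congr 1
  funext k
  rw [epsE1 l x y z hxy hxz hyz s]
  have hzi := lft_ne l i
  have hzj := lft_ne l j
  have hzk := lft_ne l k.1
  by_cases hlz : l = z
  · -- both updates have `l` in their pair; reads unchanged
    have hmem : l ∈ ({x, z} : Finset ℕ) := by simp [mem_pair']; omega
    have hmem' : l ∈ ({y, z} : Finset ℕ) := by simp [mem_pair']; omega
    have d1 : ({lft l j, lft l k.1} : Finset ℕ) ≠ {x, z} := fun hq => by
      rcases pair_eq_pair_iff'.mp hq with ⟨f1, f2⟩ | ⟨f1, f2⟩ <;> omega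
    have d2 : ({lft l j, lft l k.1} : Finset ℕ) ≠ {y, z} := fun hq => by
      rcases pair_eq_pair_iff'.mp hq with ⟨f1, f2⟩ | ⟨f1, f2⟩ <;> omega
    rw [updMN_fst_ne l x z _ d1, updMN_fst_ne l y z _ d2,
      updMN_snd_lmem l x z _ hmem, updMN_snd_lmem l y z _ hmem',
      updMN_snd_lmem l x z _ hmem, updMN_snd_lmem l y z _ hmem']
  -- l ∉ {x, y, z}
  have horient := pair_eq_lft l i j hl himg
  have hmi : lft l i = x ∨ lft l i = y := by rcases horient with ⟨h1, h2⟩ | ⟨h1, h2⟩ <;> omega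
  have hmj : lft l j = x ∨ lft l j = y := by rcases horient with ⟨h1, h2⟩ | ⟨h1, h2⟩ <;> omega
  by_cases hk : lft l k.1 = z
  swap
  · -- reads untouched
    have d1 : ({lft l j, lft l k.1} : Finset ℕ) ≠ {x, z} := fun hq => by
      rcases pair_eq_pair_iff'.mp hq with ⟨f1, f2⟩ | ⟨f1, f2⟩ <;> omega
    have d2 : ({lft l j, lft l k.1} : Finset ℕ) ≠ {y, z} := fun hq => by
      rcases pair_eq_pair_iff'.mp hq with ⟨f1, f2⟩ | ⟨f1, f2⟩ <;> omega
    have d3 : ({lft l i, lft l k.1} : Finset ℕ) ≠ {x, z} := fun hq => by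
      rcases pair_eq_pair_iff'.mp hq with ⟨f1, f2⟩ | ⟨f1, f2⟩ <;> omega
    have d4 : ({lft l i, lft l k.1} : Finset ℕ) ≠ {y, z} := fun hq => by
      rcases pair_eq_pair_iff'.mp hq with ⟨f1, f2⟩ | ⟨f1, f2⟩ <;> omega
    rw [updMN_fst_ne l x z _ d1, updMN_fst_ne l y z _ d2,
      updMN_snd_ne l x z _ d3, updMN_snd_ne l y z _ d4,
      updMN_snd_ne l x z _ d1, updMN_snd_ne l y z _ d2]
  -- the interesting coordinate
  have hlnxz : l ∉ ({x, z} : Finset ℕ) := by simp [mem_pair']; omega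
  have hlnyz : l ∉ ({y, z} : Finset ℕ) := by simp [mem_pair']; omega
  have exz : epsMN l x z (updMN l y z s).1 = epsMN l x z s.1 := by
    rw [epsMN_updMN,
      if_neg (fun hq => by rcases pair_eq_pair_iff'.mp hq with ⟨f1, f2⟩ | ⟨f1, f2⟩ <;> omega),
      if_neg (fun hq => by rcases pair_eq_pair_iff'.mp hq with ⟨f1, f2⟩ | ⟨f1, f2⟩ <;> omega),
      add_zero, add_zero]
  have hne1 : ({x, z} : Finset ℕ) ≠ {y, z} := fun hq => by
    rcases pair_eq_pair_iff'.mp hq with ⟨f1, f2⟩ | ⟨f1, f2⟩ <;> omega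
  have hne2 : ({y, z} : Finset ℕ) ≠ {x, z} := fun hq => by
    rcases pair_eq_pair_iff'.mp hq with ⟨f1, f2⟩ | ⟨f1, f2⟩ <;> omega
  have hsum : epsMN l x z s.1 + epsMN l y z s.1 = epsMN l x y s.1 := epsMN_add l x y z s.1
  rcases horient with ⟨ox, oy⟩ | ⟨ox, oy⟩
  · -- x = lft i, y = lft j
    have hPi : ({lft l i, lft l k.1} : Finset ℕ) = {x, z} := by rw [← ox, hk]
    have hPj : ({lft l j, lft l k.1} : Finset ℕ) = {y, z} := by rw [← oy, hk]
    rw [updMN_fst_ne l x z _ (hPj.trans_ne hne2), updMN_fst_hit l y z _ hPj,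
      updMN_snd_hit l x z _ hPi hlnxz, exz, updMN_snd_ne l y z _ (hPi.trans_ne hne1),
      updMN_snd_ne l x z _ (hPj.trans_ne hne2), updMN_snd_hit l y z _ hPj hlnyz]
    by_cases he : epsMN l x y s.1 = 0
    · rw [if_pos he, if_pos he]
      have hb := bracket_add (hsum.trans he)
      linear_combination hb
    · rw [if_neg he, if_neg he]
      have he1 : epsMN l x y s.1 = 1 := (zmod2_cases _).resolve_left he
      have hb := bracket_add' (hsum.trans he1)
      have h2' : (2 : ZMod 2) = 0 := by decide
      linear_combination hb + h2'
  · -- x = lft j, y = lft i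
    have hPi : ({lft l i, lft l k.1} : Finset ℕ) = {y, z} := by rw [← oy, hk]
    have hPj : ({lft l j, lft l k.1} : Finset ℕ) = {x, z} := by rw [← ox, hk]
    rw [updMN_fst_hit l x z _ hPj, updMN_fst_ne l y z _ (hPj.trans_ne hne1),
      updMN_snd_ne l x z _ (hPi.trans_ne hne2), updMN_snd_hit l y z _ hPi hlnyz,
      updMN_snd_hit l x z _ hPj hlnxz, exz, updMN_snd_ne l y z _ (hPj.trans_ne hne1)]
    by_cases he : epsMN l x y s.1 = 0
    · rw [if_pos he, if_pos he]
      have hb := bracket_add (hsum.trans he)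
      linear_combination hb
    · rw [if_neg he, if_neg he]
      have he1 : epsMN l x y s.1 = 1 := (zmod2_cases _).resolve_left he
      have hb := bracket_add' (hsum.trans he1)
      have h2' : (2 : ZMod 2) = 0 := by decide
      linear_combination hb + h2'

end MNV
section MNV2

set_option linter.unusedSectionVars false

lemma bracket_eq {u w : ZMod 2} (h : u + w = 0) :
    (if u = 0 then (1 : ZMod 2) else 0) = (if w = 0 then 1 else 0) := by
  revert h; revert u w; decide

lemma bracket_eq' {u w : ZMod 2} (h : u + w = 1) :
    (if u = 0 then (1 : ZMod 2) else 0) = 1 + (if w = 0 then 1 else 0) := by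
  revert h; revert u w; decide

variable (n l i j : ℕ)

lemma vMN_V2 (hij' : i ≠ j) (x y z : ℕ) (hxy : x ≠ y) (hxz : x ≠ z) (hyz : y ≠ z) (s : StMN) :
    vMN n l i j x z (updMN l x y s) = vMN n l i j x z (updMN l y z s) := by
  unfold vMN
  by_cases hl : l ∈ ({x, z} : Finset ℕ)
  · rw [if_pos hl, if_pos hl]
  rw [if_neg hl, if_neg hl]
  by_cases himg : ({del l x, del l z} : Finset ℕ) = ({i, j} : Finset ℕ)
  swap
  · rw [if_neg himg, if_neg himg]
  rw [if_pos himg, if_pos himg]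
  have hlx : l ≠ x := fun h => hl (by simp [h])
  have hlz : l ≠ z := fun h => hl (by simp [h])
  congr 1
  funext k
  rw [epsE2 l x y z hxy hxz hyz s]
  have hzi := lft_ne l i
  have hzj := lft_ne l j
  have hzk := lft_ne l k.1
  by_cases hly : l = y
  · -- both updates have `l` in their pair; all reads unchanged
    have hmem : l ∈ ({x, y} : Finset ℕ) := by simp [mem_pair']; omega
    have hmem' : l ∈ ({y, z} : Finset ℕ) := by simp [mem_pair']; omega
    have d1 : ({lft l j, lft l k.1} : Finset ℕ) ≠ {x, y} := fun hq => by
      rcases pair_eq_pair_iff'.mp hq with ⟨f1, f2⟩ | ⟨f1, f2⟩ <;> omega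
    have d2 : ({lft l j, lft l k.1} : Finset ℕ) ≠ {y, z} := fun hq => by
      rcases pair_eq_pair_iff'.mp hq with ⟨f1, f2⟩ | ⟨f1, f2⟩ <;> omega
    rw [updMN_fst_ne l x y _ d1, updMN_fst_ne l y z _ d2,
      updMN_snd_lmem l x y _ hmem, updMN_snd_lmem l y z _ hmem',
      updMN_snd_lmem l x y _ hmem, updMN_snd_lmem l y z _ hmem']
  -- l ∉ {x, y, z}
  have horient := pair_eq_lft l i j hl himg
  have hmi : lft l i = x ∨ lft l i = z := by rcases horient with ⟨h1, h2⟩ | ⟨h1, h2⟩ <;> omega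
  have hmj : lft l j = x ∨ lft l j = z := by rcases horient with ⟨h1, h2⟩ | ⟨h1, h2⟩ <;> omega
  by_cases hk : lft l k.1 = y
  swap
  · -- reads untouched
    have d1 : ({lft l j, lft l k.1} : Finset ℕ) ≠ {x, y} := fun hq => by
      rcases pair_eq_pair_iff'.mp hq with ⟨f1, f2⟩ | ⟨f1, f2⟩ <;> omega
    have d2 : ({lft l j, lft l k.1} : Finset ℕ) ≠ {y, z} := fun hq => by
      rcases pair_eq_pair_iff'.mp hq with ⟨f1, f2⟩ | ⟨f1, f2⟩ <;> omega
    have d3 : ({lft l i, lft l k.1} : Finset ℕ) ≠ {x, y} := fun hq => by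
      rcases pair_eq_pair_iff'.mp hq with ⟨f1, f2⟩ | ⟨f1, f2⟩ <;> omega
    have d4 : ({lft l i, lft l k.1} : Finset ℕ) ≠ {y, z} := fun hq => by
      rcases pair_eq_pair_iff'.mp hq with ⟨f1, f2⟩ | ⟨f1, f2⟩ <;> omega
    rw [updMN_fst_ne l x y _ d1, updMN_fst_ne l y z _ d2,
      updMN_snd_ne l x y _ d3, updMN_snd_ne l y z _ d4,
      updMN_snd_ne l x y _ d1, updMN_snd_ne l y z _ d2]
  -- the interesting coordinate
  have hlnxy : l ∉ ({x, y} : Finset ℕ) := by simp [mem_pair']; omega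
  have hlnyz : l ∉ ({y, z} : Finset ℕ) := by simp [mem_pair']; omega
  have eR : epsMN l x z (updMN l y z s).1 = epsMN l x z s.1 := by
    rw [epsMN_updMN,
      if_neg (fun hq => by rcases pair_eq_pair_iff'.mp hq with ⟨f1, f2⟩ | ⟨f1, f2⟩ <;> omega),
      if_neg (fun hq => by rcases pair_eq_pair_iff'.mp hq with ⟨f1, f2⟩ | ⟨f1, f2⟩ <;> omega),
      add_zero, add_zero]
  rw [eR]
  have hsum : epsMN l x y s.1 + epsMN l y z s.1 = epsMN l x z s.1 := by
    have h := epsMN_add l x z y s.1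
    rwa [epsMN_comm_args l z y] at h
  have hne1 : ({x, y} : Finset ℕ) ≠ {y, z} := fun hq => by
    rcases pair_eq_pair_iff'.mp hq with ⟨f1, f2⟩ | ⟨f1, f2⟩ <;> omega
  have hne2 : ({y, z} : Finset ℕ) ≠ {x, y} := fun hq => by
    rcases pair_eq_pair_iff'.mp hq with ⟨f1, f2⟩ | ⟨f1, f2⟩ <;> omega
  rcases horient with ⟨ox, oz⟩ | ⟨ox, oz⟩
  · -- x = lft i, z = lft j
    have hPi : ({lft l i, lft l k.1} : Finset ℕ) = {x, y} := by rw [← ox, hk]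
    have hPj : ({lft l j, lft l k.1} : Finset ℕ) = {y, z} := by
      rw [← oz, hk]; exact Finset.pair_comm z y
    rw [updMN_fst_ne l x y _ (hPj.trans_ne hne2), updMN_fst_hit l y z _ hPj,
      updMN_snd_hit l x y _ hPi hlnxy, updMN_snd_ne l y z _ (hPi.trans_ne hne1),
      updMN_snd_ne l x y _ (hPj.trans_ne hne2), updMN_snd_hit l y z _ hPj hlnyz]
    by_cases he : epsMN l x z s.1 = 0
    · rw [if_pos he, if_pos he, bracket_eq (hsum.trans he)]
      ring
    · rw [if_neg he, if_neg he]
      have he1 : epsMN l x z s.1 = 1 := (zmod2_cases _).resolve_left he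
      rw [bracket_eq' (hsum.trans he1)]
      ring
  · -- x = lft j, z = lft i
    have hPi : ({lft l i, lft l k.1} : Finset ℕ) = {y, z} := by
      rw [← oz, hk]; exact Finset.pair_comm z y
    have hPj : ({lft l j, lft l k.1} : Finset ℕ) = {x, y} := by rw [← ox, hk]
    rw [updMN_fst_hit l x y _ hPj, updMN_fst_ne l y z _ (hPj.trans_ne hne1),
      updMN_snd_ne l x y _ (hPi.trans_ne hne2), updMN_snd_hit l y z _ hPi hlnyz,
      updMN_snd_hit l x y _ hPj hlnxy, updMN_snd_ne l y z _ (hPj.trans_ne hne1)]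
    by_cases he : epsMN l x z s.1 = 0
    · rw [if_pos he, if_pos he, bracket_eq (hsum.trans he)]
      ring
    · rw [if_neg he, if_neg he]
      have he1 : epsMN l x z s.1 = 1 := (zmod2_cases _).resolve_left he
      rw [bracket_eq' (hsum.trans he1)]
      have h2' : (2 : ZMod 2) = 0 := by decide
      linear_combination h2'

end MNV2
section MNTri

set_option linter.unusedSectionVars false

variable (n l i j : ℕ)

lemma vMN_triv {x y : ℕ}
    (h : ¬(l ∉ ({x, y} : Finset ℕ) ∧ ({del l x, del l y} : Finset ℕ) = {i, j})) :
    ∀ s, vMN n l i j x y s = 1 := by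
  intro s
  by_cases hm : l ∈ ({x, y} : Finset ℕ)
  · exact vMN_of_mem n l i j x y hm s
  · exact vMN_of_img n l i j x y (fun hq => h ⟨hm, hq⟩) s

lemma genMN_tri (hij' : i ≠ j) (x y z : ℕ) (hxy : x ≠ y) (hxz : x ≠ z) (hyz : y ≠ z) :
    genMN n l i j x y * genMN n l i j x z * genMN n l i j y z
      = genMN n l i j y z * genMN n l i j x z * genMN n l i j x y := by
  refine WrMN.ext'' (fun s => ?_) (fun s => ?_)
  · simp only [WrMN.mul_v, WrMN.mul_p, genMN_v, genMN_p]
    have hA : vMN n l i j y z (updMN l x z (updMN l x y s)) = vMN n l i j y z s := by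
      have h := vMN_V13 n l i j hij' z y x (Ne.symm hyz) (Ne.symm hxz) (Ne.symm hxy) s
      rwa [updMN_comm_args l z x, updMN_comm_args l y x, vMN_comm_args n l i j z y] at h
    rw [hA, vMN_V2 n l i j hij' x y z hxy hxz hyz s,
      vMN_V13 n l i j hij' x y z hxy hxz hyz s]
    by_cases pxy : l ∉ ({x, y} : Finset ℕ) ∧ ({del l x, del l y} : Finset ℕ) = {i, j}
    · have t2 : ¬(l ∉ ({x, z} : Finset ℕ) ∧ ({del l x, del l z} : Finset ℕ) = {i, j}) := by
        rintro ⟨h1, h2⟩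
        rcases pair_eq_lft l i j pxy.1 pxy.2 with ⟨a1, a2⟩ | ⟨a1, a2⟩ <;>
          rcases pair_eq_lft l i j h1 h2 with ⟨b1, b2⟩ | ⟨b1, b2⟩ <;> omega
      have t3 : ¬(l ∉ ({y, z} : Finset ℕ) ∧ ({del l y, del l z} : Finset ℕ) = {i, j}) := by
        rintro ⟨h1, h2⟩
        rcases pair_eq_lft l i j pxy.1 pxy.2 with ⟨a1, a2⟩ | ⟨a1, a2⟩ <;>
          rcases pair_eq_lft l i j h1 h2 with ⟨b1, b2⟩ | ⟨b1, b2⟩ <;> omega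
      rw [vMN_triv n l i j t2, vMN_triv n l i j t3]
      try simp
    · by_cases pxz : l ∉ ({x, z} : Finset ℕ) ∧ ({del l x, del l z} : Finset ℕ) = {i, j}
      · have t3 : ¬(l ∉ ({y, z} : Finset ℕ) ∧ ({del l y, del l z} : Finset ℕ) = {i, j}) := by
          rintro ⟨h1, h2⟩
          rcases pair_eq_lft l i j pxz.1 pxz.2 with ⟨a1, a2⟩ | ⟨a1, a2⟩ <;>
            rcases pair_eq_lft l i j h1 h2 with ⟨b1, b2⟩ | ⟨b1, b2⟩ <;> omega
        rw [vMN_triv n l i j pxy, vMN_triv n l i j t3]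
        try simp
      · rw [vMN_triv n l i j pxy, vMN_triv n l i j pxz]
        try simp
  · simp only [WrMN.mul_p, genMN_p]
    refine Prod.ext ?_ ?_
    · funext q
      simp only [updMN_fst]
      ring
    · funext q
      simp only [updMN_snd]
      rw [epsE2 l x y z hxy hxz hyz s, epsE1' l x y z hxy hxz hyz s,
        epsE1 l x y z hxy hxz hyz s]
      ring

/-- Image of `fgen2` under the lift. -/
lemma lift_fgen2 (u v : ℕ) (hu : 1 ≤ u) (hv : 1 ≤ v) (huv : u ≠ v)
    (hun : u ≤ n + 1) (hvn : v ≤ n + 1) :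
    FreeGroup.lift (fun a : PIdx (n + 1) => genMN n l i j a.1.1 a.1.2) (fgen2 (n + 1) u v)
      = genMN n l i j u v := by
  unfold fgen2
  have hok : P2ok (n + 1) (sort2 u v) := by
    unfold sort2 P2ok
    refine ⟨?_, ?_, ?_⟩ <;> simp <;> omega
  rw [dif_pos hok, FreeGroup.lift_apply_of]
  show genMN n l i j (sort2 u v).1 (sort2 u v).2 = _
  unfold sort2
  rcases le_total u v with h | h
  · rw [min_eq_left h, max_eq_right h]
  · rw [min_eq_right h, max_eq_left h]
    exact genMN_comm_args n l i j v u

/-- The relators of `G_{n+1}^2` die in the wreath-type group. -/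
lemma killMN (hij' : i ≠ j) :
    ∀ r ∈ rels2 (n + 1),
      (FreeGroup.lift (fun a : PIdx (n + 1) => genMN n l i j a.1.1 a.1.2)) r = 1 := by
  intro r hr
  rcases hr with (hr | hr) | hr
  · obtain ⟨a, rfl⟩ := hr
    rw [map_mul, FreeGroup.lift_apply_of]
    exact genMN_sq n l i j hij' a.1.1 a.1.2
  · obtain ⟨a, b, c, d, h1a, h2a, h1b, h2b, h1c, h2c, h1d, h2d,
      hab, hac, had, hbc, hbd, hcd, hre⟩ := hr
    subst hre
    simp only [map_mul, map_inv]
    rw [lift_fgen2 n l i j a b h1a h1b hab h2a h2b,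
      lift_fgen2 n l i j c d h1c h1d hcd h2c h2d]
    have hcomm := genMN_comm n l i j hij' a b c d hac had hbc hbd
    rw [hcomm]
    group
  · obtain ⟨a, b, c, h1a, h2a, h1b, h2b, h1c, h2c, hab, hac, hbc, hre⟩ := hr
    subst hre
    simp only [map_mul, map_inv]
    rw [lift_fgen2 n l i j a b h1a h1b hab h2a h2b,
      lift_fgen2 n l i j a c h1a h1c hac h2a h2c,
      lift_fgen2 n l i j b c h1b h1c hbc h2b h2c]
    rw [genMN_tri n l i j hij' a b c hab hac hbc]
    group

end MNTri
section MNList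

lemma enum_snoc {α : Type} (γ : List α) (b : α) :
    ((γ ++ [b]).zipIdx.map Prod.swap) = (γ.zipIdx.map Prod.swap) ++ [(γ.length, b)] := by
  simp [List.zipIdx_append]

lemma mem_enum_lt {α : Type} {γ : List α} {x : ℕ × α} (hx : x ∈ γ.zipIdx.map Prod.swap) : x.1 < γ.length := by
  obtain ⟨⟨c, k⟩, hy, rfl⟩ := List.mem_map.mp hx
  exact (List.mem_zipIdx' hy).1

lemma wP2_snoc {n : ℕ} (i j : ℕ) (γ : List (PPIdx n)) (b : PPIdx n) :
    wP2 i j (γ ++ [b]) = wP2 i j γ *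
      (if pairSet b.1 = ({i, j} : Finset ℕ)
        then (PresentedGroup.of (iCP2 i j b.2 γ) : F2 n i j) else 1) := by
  unfold wP2
  rw [enum_snoc, List.filter_append, List.map_append, List.prod_append]
  congr 1
  · refine congrArg List.prod ?_
    apply List.map_congr_left
    intro x hx
    have hlt : x.1 < γ.length := mem_enum_lt (List.mem_of_mem_filter hx)
    rw [List.take_append_of_le_length (le_of_lt hlt)]
  · by_cases hb : pairSet b.1 = ({i, j} : Finset ℕ)
    · rw [if_pos hb]
      have hfil : List.filter (fun x : ℕ × PPIdx n => decide (pairSet x.2.1 = ({i, j} : Finset ℕ)))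
          [(γ.length, b)] = [(γ.length, b)] := by simp [hb]
      rw [hfil, List.map_singleton, List.prod_singleton, List.take_left]
    · rw [if_neg hb]
      have hfil : List.filter (fun x : ℕ × PPIdx n => decide (pairSet x.2.1 = ({i, j} : Finset ℕ)))
          [(γ.length, b)] = [] := by simp [hb]
      rw [hfil, List.map_nil, List.prod_nil]

lemma psiWord_snoc (n l : ℕ) (β : List (PIdx (n + 1))) (a : PIdx (n + 1)) :
    psiWord n l (β ++ [a]) = psiWord n l β ++
      (if l = a.1.1 ∨ l = a.1.2 then []
       else ((pairMkS n (del l a.1.1) (del l a.1.2)).map fun p =>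
         (p, ((cnt2 β a.1.1 l + cnt2 β a.1.2 l : ℕ) : ZMod 2))).toList) := by
  unfold psiWord
  rw [enum_snoc, List.filterMap_append]
  congr 1
  · apply List.filterMap_congr
    intro x hx
    have hlt : x.1 < β.length := mem_enum_lt hx
    rw [List.take_append_of_le_length (le_of_lt hlt)]
  · show List.filterMap _ [(β.length, a)] = _
    rw [show ∀ (f : ℕ × PIdx (n+1) → Option (PPIdx n)) (c : ℕ × PIdx (n+1)),
        List.filterMap f [c] = (f c).toList from fun f c => by
      cases h : f c <;> simp [List.filterMap, h]]
    by_cases hm : l = a.1.1 ∨ l = a.1.2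
    · rw [if_pos hm, if_pos hm]; rfl
    · rw [if_neg hm, if_neg hm, List.take_left]

lemma cntP2_append {n : ℕ} (γ γ' : List (PPIdx n)) (u v : ℕ) (e : ZMod 2) :
    cntP2 (γ ++ γ') u v e = cntP2 γ u v e + cntP2 γ' u v e := by
  unfold cntP2
  rw [List.filter_append, List.length_append]

end MNList
section MNMain

set_option linter.unusedSectionVars false

def stProdMN (n l i j : ℕ) (β : List (PIdx (n + 1))) : WrMN (F2 n i j) :=
  (β.map fun a => genMN n l i j a.1.1 a.1.2).prod

lemma stProdMN_snoc (n l i j : ℕ) (β : List (PIdx (n + 1))) (a : PIdx (n + 1)) :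
    stProdMN n l i j (β ++ [a]) = stProdMN n l i j β * genMN n l i j a.1.1 a.1.2 := by
  unfold stProdMN
  rw [List.map_append, List.prod_append, List.map_singleton, List.prod_singleton]

lemma pairMk_ok (n l : ℕ) (hl1 : 1 ≤ l) (hl2 : l ≤ n + 1) (a : PIdx (n + 1))
    (hm : ¬(l = a.1.1 ∨ l = a.1.2)) :
    P2ok n (sort2 (del l a.1.1) (del l a.1.2)) := by
  obtain ⟨h1, h2, h3⟩ := a.2
  push_neg at hm
  obtain ⟨hm1, hm2⟩ := hm
  unfold sort2 del P2ok
  split_ifs <;> refine ⟨?_, ?_, ?_⟩ <;> simp <;> omega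

lemma pairSet_sort2 {n : ℕ} (u v : ℕ) (h : P2ok n (sort2 u v)) :
    pairSet (⟨sort2 u v, h⟩ : PIdx n) = {u, v} := by
  show ({(sort2 u v).1, (sort2 u v).2} : Finset ℕ) = {u, v}
  unfold sort2
  rcases le_total u v with hc | hc
  · rw [min_eq_left hc, max_eq_right hc]
  · rw [min_eq_right hc, max_eq_left hc]
    exact Finset.pair_comm v u

lemma cntP2_singleton {n : ℕ} (x : PPIdx n) (u v : ℕ) (e : ZMod 2) :
    cntP2 [x] u v e = if pairSet x.1 = ({u, v} : Finset ℕ) ∧ x.2 = e then 1 else 0 := by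
  unfold cntP2
  by_cases h : pairSet x.1 = ({u, v} : Finset ℕ) ∧ x.2 = e <;> simp [h]

lemma cntSet_snoc {n : ℕ} (β : List (PIdx (n + 1))) (a : PIdx (n + 1)) (q : Finset ℕ) :
    ((β ++ [a]).filter fun x => decide (pairSet x = q)).length
      = (β.filter fun x => decide (pairSet x = q)).length
        + if q = ({a.1.1, a.1.2} : Finset ℕ) then 1 else 0 := by
  rw [List.filter_append, List.length_append]
  congr 1
  have ha : pairSet a = ({a.1.1, a.1.2} : Finset ℕ) := rfl
  by_cases h : q = ({a.1.1, a.1.2} : Finset ℕ)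
  · rw [if_pos h]; simp [ha, h]
  · rw [if_neg h]
    have hpa : ¬ pairSet a = q := fun hh => h hh.symm
    simp [List.filter, hpa]

lemma mainMN (n l i j : ℕ) (hl1 : 1 ≤ l) (hl2 : l ≤ n + 1) (β : List (PIdx (n + 1))) :
    (∀ q : Finset ℕ,
      ((stProdMN n l i j β).p s0MN).1 q
        = ((β.filter fun x => decide (pairSet x = q)).length : ZMod 2)) ∧
    (∀ u v : ℕ, l ≠ u → l ≠ v →
      ((stProdMN n l i j β).p s0MN).2 {u, v}
        = ((cntP2 (psiWord n l β) (del l u) (del l v) 0 : ℕ) : ZMod 2)) ∧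
    (∀ u v : ℕ, l ≠ u → l ≠ v →
      (((β.filter fun x => decide (pairSet x = ({u, v} : Finset ℕ))).length : ℕ) : ZMod 2)
        = ((cntP2 (psiWord n l β) (del l u) (del l v) 0 : ℕ) : ZMod 2)
          + ((cntP2 (psiWord n l β) (del l u) (del l v) 1 : ℕ) : ZMod 2)) ∧
    (stProdMN n l i j β).v s0MN = wP2 i j (psiWord n l β) := by
  induction β using List.reverseRecOn with
  | nil =>
    refine ⟨fun q => ?_, fun u v hu hv => ?_, fun u v hu hv => ?_, ?_⟩ <;>
      simp [stProdMN, s0MN, psiWord, wP2, cntP2]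
  | append_singleton β a IH =>
    obtain ⟨IH1, IH2, IH3, IH4⟩ := IH
    have hpsi := psiWord_snoc n l β a
    have heps : epsMN l a.1.1 a.1.2 ((stProdMN n l i j β).p s0MN).1
        = ((cnt2 β a.1.1 l + cnt2 β a.1.2 l : ℕ) : ZMod 2) := by
      show ((stProdMN n l i j β).p s0MN).1 {a.1.1, l}
          + ((stProdMN n l i j β).p s0MN).1 {a.1.2, l} = _
      rw [IH1, IH1, Nat.cast_add]
      rfl
    refine ⟨fun q => ?_, fun u v hu hv => ?_, fun u v hu hv => ?_, ?_⟩
    · -- invariant (1) : counts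
      rw [stProdMN_snoc, WrMN.mul_p, genMN_p, updMN_fst, IH1 q, cntSet_snoc, Nat.cast_add]
      congr 1
      by_cases hq : q = ({a.1.1, a.1.2} : Finset ℕ)
      · rw [if_pos hq, if_pos hq, Nat.cast_one]
      · rw [if_neg hq, if_neg hq, Nat.cast_zero]
    · -- invariant (2) : N^0 counts
      rw [stProdMN_snoc, WrMN.mul_p, genMN_p, updMN_snd, IH2 u v hu hv, hpsi]
      by_cases hm : l = a.1.1 ∨ l = a.1.2
      · rw [if_pos hm, List.append_nil, if_neg, add_zero]
        exact fun hc => hc.2.1 (mem_pair'.mpr hm)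
      · have hok := pairMk_ok n l hl1 hl2 a hm
        have hmk : pairMkS n (del l a.1.1) (del l a.1.2)
            = some ⟨sort2 (del l a.1.1) (del l a.1.2), hok⟩ := dif_pos hok
        rw [if_neg hm, hmk, Option.map_some, Option.toList_some, cntP2_append,
          cntP2_singleton, pairSet_sort2, heps]
        push_neg at hm
        have hl12 : l ∉ ({a.1.1, a.1.2} : Finset ℕ) := by
          rw [mem_pair']; omega
        by_cases hset : ({u, v} : Finset ℕ) = ({a.1.1, a.1.2} : Finset ℕ)
        · have hdel : ({del l a.1.1, del l a.1.2} : Finset ℕ) = {del l u, del l v} := by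
            rcases pair_eq_pair_iff'.mp hset with ⟨e1, e2⟩ | ⟨e1, e2⟩
            · rw [e1, e2]
            · rw [e1, e2]; exact Finset.pair_comm _ _
          by_cases hC : ((cnt2 β a.1.1 l + cnt2 β a.1.2 l : ℕ) : ZMod 2) = 0
          · rw [if_pos ⟨hset, hl12, hC⟩, if_pos ⟨hdel, hC⟩]
            push_cast
            ring
          · rw [if_neg (fun hc => hC hc.2.2), if_neg (fun hc => hC hc.2), add_zero]
            push_cast
            ring
        · rw [if_neg (fun hc => hset hc.1), if_neg, add_zero]
          · push_cast
            ring
          · rintro ⟨hc1, -⟩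
            rcases pair_eq_pair_iff'.mp hc1 with ⟨e1, e2⟩ | ⟨e1, e2⟩
            · exact hset (by
                have g1 := del_inj (show l ≠ a.1.1 by omega) hu e1
                have g2 := del_inj (show l ≠ a.1.2 by omega) hv e2
                rw [← g1, ← g2])
            · exact hset (by
                have g1 := del_inj (show l ≠ a.1.1 by omega) hv e1
                have g2 := del_inj (show l ≠ a.1.2 by omega) hu e2
                rw [← g1, ← g2]; exact Finset.pair_comm _ _)
      -- end (2)
    · -- invariant (3) : totals
      rw [cntSet_snoc, hpsi]
      by_cases hm : l = a.1.1 ∨ l = a.1.2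
      · rw [if_pos hm, List.append_nil, if_neg (fun hq => ?_), Nat.add_zero]
        · exact IH3 u v hu hv
        · rcases pair_eq_pair_iff'.mp hq with ⟨f1, f2⟩ | ⟨f1, f2⟩ <;> omega
      · have hok := pairMk_ok n l hl1 hl2 a hm
        have hmk : pairMkS n (del l a.1.1) (del l a.1.2)
            = some ⟨sort2 (del l a.1.1) (del l a.1.2), hok⟩ := dif_pos hok
        rw [if_neg hm, hmk, Option.map_some, Option.toList_some, cntP2_append, cntP2_append,
          cntP2_singleton, cntP2_singleton, pairSet_sort2]
        push_neg at hm
        by_cases hset : ({u, v} : Finset ℕ) = ({a.1.1, a.1.2} : Finset ℕ)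
        · have hdel : ({del l a.1.1, del l a.1.2} : Finset ℕ) = {del l u, del l v} := by
            rcases pair_eq_pair_iff'.mp hset with ⟨e1, e2⟩ | ⟨e1, e2⟩
            · rw [e1, e2]
            · rw [e1, e2]; exact Finset.pair_comm _ _
          rw [if_pos hset]
          rcases zmod2_cases ((cnt2 β a.1.1 l + cnt2 β a.1.2 l : ℕ) : ZMod 2) with hC | hC
          · rw [if_pos ⟨hdel, hC⟩, if_neg (fun hc => by
              have h1 : ((cnt2 β a.1.1 l + cnt2 β a.1.2 l : ℕ) : ZMod 2) = 1 := hc.2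
              rw [hC] at h1
              exact absurd h1 (by decide))]
            push_cast
            rw [IH3 u v hu hv]
            ring
          · rw [if_neg (fun hc => by
              have h1 : ((cnt2 β a.1.1 l + cnt2 β a.1.2 l : ℕ) : ZMod 2) = 0 := hc.2
              rw [hC] at h1
              exact absurd h1 (by decide)), if_pos ⟨hdel, hC⟩]
            push_cast
            rw [IH3 u v hu hv]
            ring
        · have hng : ¬(({del l a.1.1, del l a.1.2} : Finset ℕ) = {del l u, del l v}) := by
            intro hc1
            rcases pair_eq_pair_iff'.mp hc1 with ⟨e1, e2⟩ | ⟨e1, e2⟩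
            · exact hset (by
                have g1 := del_inj (show l ≠ a.1.1 by omega) hu e1
                have g2 := del_inj (show l ≠ a.1.2 by omega) hv e2
                rw [← g1, ← g2])
            · exact hset (by
                have g1 := del_inj (show l ≠ a.1.1 by omega) hv e1
                have g2 := del_inj (show l ≠ a.1.2 by omega) hu e2
                rw [← g1, ← g2]; exact Finset.pair_comm _ _)
          rw [if_neg hset, if_neg (fun hc => hng hc.1), if_neg (fun hc => hng hc.1)]
          push_cast
          rw [IH3 u v hu hv]
          ring
      -- end (3)
    · -- invariant (4) : the value
      rw [stProdMN_snoc, WrMN.mul_v, genMN_v, IH4, hpsi]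
      by_cases hm : l = a.1.1 ∨ l = a.1.2
      · rw [if_pos hm, List.append_nil, vMN_of_mem n l i j _ _ (mem_pair'.mpr hm), mul_one]
      · have hok := pairMk_ok n l hl1 hl2 a hm
        have hmk : pairMkS n (del l a.1.1) (del l a.1.2)
            = some ⟨sort2 (del l a.1.1) (del l a.1.2), hok⟩ := dif_pos hok
        rw [if_neg hm, hmk, Option.map_some, Option.toList_some, wP2_snoc, pairSet_sort2]
        congr 1
        unfold vMN
        rw [if_neg (fun hc => hm (mem_pair'.mp hc))]
        by_cases himg : ({del l a.1.1, del l a.1.2} : Finset ℕ) = ({i, j} : Finset ℕ)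
        swap
        · rw [if_neg himg, if_neg himg]
        rw [if_pos himg, if_pos himg]
        congr 1
        funext k
        rw [heps]
        unfold iCP2
        have hki := IH2 (lft l i) (lft l k.1) (Ne.symm (lft_ne l i)) (Ne.symm (lft_ne l k.1))
        rw [del_lft, del_lft] at hki
        have hkj := IH2 (lft l j) (lft l k.1) (Ne.symm (lft_ne l j)) (Ne.symm (lft_ne l k.1))
        rw [del_lft, del_lft] at hkj
        by_cases he : ((cnt2 β a.1.1 l + cnt2 β a.1.2 l : ℕ) : ZMod 2) = 0
        · rw [if_pos he, if_pos he, hki, hkj, Nat.cast_add]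
        · rw [if_neg he, if_neg he, hki, Nat.cast_add]
          congr 1
          have h3j := IH3 (lft l j) (lft l k.1) (Ne.symm (lft_ne l j)) (Ne.symm (lft_ne l k.1))
          rw [del_lft, del_lft] at h3j
          rw [IH1 ({lft l j, lft l k.1} : Finset ℕ), hkj, h3j]
          have h2' : (2 : ZMod 2) = 0 := by decide
          linear_combination ((cntP2 (psiWord n l β) j k.1 0 : ℕ) : ZMod 2) * h2'

end MNMain
theorem statement_12 (n l i j : ℕ) (hn : 3 ≤ n) (hl1 : 1 ≤ l) (hl2 : l ≤ n + 1)
    (hi : 1 ≤ i) (hij : i < j) (hj : j ≤ n)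
    (β β' : List (PIdx (n + 1))) (hg : good2 β) (hg' : good2 β')
    (h : toG2 β = toG2 β') :
    wP2 i j (psiWord n l β) = wP2 i j (psiWord n l β') := by
  have hij' : i ≠ j := Nat.ne_of_lt hij
  have hkill := killMN n l i j hij'
  have key : ∀ γ : List (PIdx (n + 1)),
      (PresentedGroup.toGroup hkill) (toG2 γ) = stProdMN n l i j γ := by
    intro γ
    show (PresentedGroup.toGroup hkill)
        (γ.map fun a => (PresentedGroup.of a : G2 (n + 1))).prod = _
    rw [map_list_prod, List.map_map]
    unfold stProdMN
    congr 1
    apply List.map_congr_left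
    intro a _
    exact PresentedGroup.toGroup.of hkill
  have h12 : (stProdMN n l i j β).v s0MN = (stProdMN n l i j β').v s0MN := by
    rw [← key β, ← key β', h]
  rw [← (mainMN n l i j hl1 hl2 β).2.2.2, ← (mainMN n l i j hl1 hl2 β').2.2.2]
  exact h12

end GnkBrunnian
end

section
/- In the group G_5^2, let X = a_{12}a_{13}a_{12}a_{13} and Y = a_{23}a_{35}a_{23}a_{35}. Then the commutator [X,Y] = X Y X^{-1} Y^{-1} is not equal to the identity element of G_5^2. -/
namespace GnkBrunnian

/-- aux -/
def swf : PIdx 5 → Equiv.Perm ℕ := fun p => Equiv.swap p.1.1 p.1.2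

lemma aux_lift (a b : ℕ) :
    FreeGroup.lift swf (fgen2 5 a b)
      = if P2ok 5 (sort2 a b) then Equiv.swap a b else 1 := by
  unfold fgen2
  split_ifs with h
  · rw [FreeGroup.lift_apply_of]
    show Equiv.swap (min a b) (max a b) = _
    rcases le_total a b with hle | hle
    · simp [min_eq_left hle, max_eq_right hle]
    · simp [min_eq_right hle, max_eq_left hle, Equiv.swap_comm]
  · rfl

lemma swap_comm_disj {a b c d : ℕ} (h1 : a ≠ c) (h2 : a ≠ d) (h3 : b ≠ c) (h4 : b ≠ d) :
    Equiv.swap a b * Equiv.swap c d = Equiv.swap c d * Equiv.swap a b := by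
  ext x
  simp only [Equiv.Perm.mul_apply, Equiv.swap_apply_def]
  split_ifs <;> omega

lemma swap_triple {a b c : ℕ} (h1 : a ≠ b) (h2 : a ≠ c) (h3 : b ≠ c) :
    Equiv.swap a b * Equiv.swap a c * Equiv.swap b c
      = Equiv.swap b c * Equiv.swap a c * Equiv.swap a b := by
  ext x
  simp only [Equiv.Perm.mul_apply, Equiv.swap_apply_def]
  split_ifs <;> omega

lemma rels_map : ∀ r ∈ rels2 5, FreeGroup.lift swf r = 1 := by
  rintro r ((⟨a, rfl⟩ | ⟨i, j, k, l, hi1, hi2, hj1, hj2, hk1, hk2, hl1, hl2,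
      hij, hik, hil, hjk, hjl, hkl, rfl⟩) |
      ⟨i, j, k, hi1, hi2, hj1, hj2, hk1, hk2, hij, hik, hjk, rfl⟩)
  · rw [map_mul, FreeGroup.lift_apply_of]
    exact Equiv.swap_mul_self _ _
  · have hij' : P2ok 5 (sort2 i j) := by simp [sort2]; omega
    have hkl' : P2ok 5 (sort2 k l) := by simp [sort2]; omega
    simp only [map_mul, map_inv, aux_lift, if_pos hij', if_pos hkl']
    rw [swap_comm_disj hik hil hjk hjl]
    group
  · have hij' : P2ok 5 (sort2 i j) := by simp [sort2]; omega
    have hik' : P2ok 5 (sort2 i k) := by simp [sort2]; omega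
    have hjk' : P2ok 5 (sort2 j k) := by simp [sort2]; omega
    simp only [map_mul, map_inv, aux_lift, if_pos hij', if_pos hik', if_pos hjk']
    rw [swap_triple hij hik hjk]
    group

noncomputable def φ : G2 5 →* Equiv.Perm ℕ := PresentedGroup.toGroup rels_map

lemma phi_ggen (a b : ℕ) (h : P2ok 5 (sort2 a b)) : φ (ggen2 5 a b) = Equiv.swap a b := by
  unfold ggen2
  rw [dif_pos h]
  rw [show (φ (PresentedGroup.of ⟨sort2 a b, h⟩)) = swf ⟨sort2 a b, h⟩ from
    PresentedGroup.toGroup.of rels_map]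
  show Equiv.swap (min a b) (max a b) = _
  rcases le_total a b with hle | hle
  · simp [min_eq_left hle, max_eq_right hle]
  · simp [min_eq_right hle, max_eq_left hle, Equiv.swap_comm]

theorem statement_13 :
    (ggen2 5 1 2 * ggen2 5 1 3 * ggen2 5 1 2 * ggen2 5 1 3) *
    (ggen2 5 2 3 * ggen2 5 3 5 * ggen2 5 2 3 * ggen2 5 3 5) *
    (ggen2 5 1 2 * ggen2 5 1 3 * ggen2 5 1 2 * ggen2 5 1 3)⁻¹ *
    (ggen2 5 2 3 * ggen2 5 3 5 * ggen2 5 2 3 * ggen2 5 3 5)⁻¹ ≠ 1 := by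
  intro hEq
  have h2 := congrArg φ hEq
  simp only [map_mul, map_inv, map_one,
    phi_ggen 1 2 (by decide), phi_ggen 1 3 (by decide),
    phi_ggen 2 3 (by decide), phi_ggen 3 5 (by decide),
    mul_inv_rev, Equiv.swap_inv] at h2
  have h3 := congrArg (fun σ : Equiv.Perm ℕ => σ 1) h2
  simp only [Equiv.Perm.mul_apply, Equiv.swap_apply_def, Equiv.Perm.one_apply] at h3
  norm_num at h3


end GnkBrunnian
end

section
/- For every n ≥ 3 and every m ∈ {1,…,n+1}, the assignment on generators r_m(a_{ijk}) = 1 if m ∉ {i,j,k}, and, if m ∈ {i,j,k}, r_m(a_{ijk}) = a_{st} where {s,t} is obtained from {i,j,k}∖{m} by decreasing each index greater than m by 1, sends every defining relator of G_{n+1}^3 to the identity of G_n^2, and hence extends to a group homomorphism r_m : G_{n+1}^3 → G_n^2. -/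
namespace GnkBrunnian

/-- The prescribed image of the generator `a_{ijk}` of `G_{n+1}^3` under `r_m`. -/
def rfun (n m : ℕ) (a : TIdx (n + 1)) : G2 n :=
  if m = a.1.1 then ggen2 n (del m a.1.2.1) (del m a.1.2.2)
  else if m = a.1.2.1 then ggen2 n (del m a.1.1) (del m a.1.2.2)
  else if m = a.1.2.2 then ggen2 n (del m a.1.1) (del m a.1.2.1)
  else 1

/-! ### Auxiliary lemmas for `statement_14` -/

lemma mk_rel_one' {α : Type} {rels : Set (FreeGroup α)} {r : FreeGroup α} (h : r ∈ rels) :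
    PresentedGroup.mk rels r = 1 :=
  (QuotientGroup.eq_one_iff r).2 (Subgroup.subset_normalClosure h)

lemma mk_fgen2 (n a b : ℕ) :
    PresentedGroup.mk (rels2 n) (fgen2 n a b) = ggen2 n a b := by
  unfold fgen2 ggen2
  split_ifs with h
  · rfl
  · exact map_one _

lemma ggen2_symm (n a b : ℕ) : ggen2 n a b = ggen2 n b a := by
  have h : sort2 a b = sort2 b a := by
    simp only [sort2, Prod.mk.injEq]; omega
  unfold ggen2
  rw [h]

lemma ggen2_sq (n a b : ℕ) : ggen2 n a b * ggen2 n a b = 1 := by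
  unfold ggen2
  split_ifs with h
  · have hrel : (FreeGroup.of (⟨sort2 a b, h⟩ : PIdx n)) * FreeGroup.of ⟨sort2 a b, h⟩ ∈ rels2 n :=
      Or.inl (Or.inl ⟨⟨sort2 a b, h⟩, rfl⟩)
    have h1 := mk_rel_one' hrel
    rw [map_mul] at h1
    exact h1
  · simp

lemma ggen2_comm (n p q s t : ℕ) (h1 : 1 ≤ p) (h2 : p ≤ n) (h3 : 1 ≤ q) (h4 : q ≤ n)
    (h5 : 1 ≤ s) (h6 : s ≤ n) (h7 : 1 ≤ t) (h8 : t ≤ n)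
    (d1 : p ≠ q) (d2 : p ≠ s) (d3 : p ≠ t) (d4 : q ≠ s) (d5 : q ≠ t) (d6 : s ≠ t) :
    ggen2 n p q * ggen2 n s t = ggen2 n s t * ggen2 n p q := by
  have hrel : fgen2 n p q * fgen2 n s t * (fgen2 n p q)⁻¹ * (fgen2 n s t)⁻¹ ∈ rels2 n :=
    Or.inl (Or.inr ⟨p, q, s, t, h1, h2, h3, h4, h5, h6, h7, h8, d1, d2, d3, d4, d5, d6, rfl⟩)
  have h := mk_rel_one' hrel
  simp only [map_mul, map_inv, mk_fgen2] at h
  rw [mul_inv_eq_one, mul_inv_eq_iff_eq_mul] at h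
  exact h

lemma ggen2_Y (n a b c : ℕ) (h1 : 1 ≤ a) (h2 : a ≤ n) (h3 : 1 ≤ b) (h4 : b ≤ n)
    (h5 : 1 ≤ c) (h6 : c ≤ n) (d1 : a ≠ b) (d2 : a ≠ c) (d3 : b ≠ c) :
    ggen2 n a b * ggen2 n a c * ggen2 n b c = ggen2 n b c * ggen2 n a c * ggen2 n a b := by
  have hrel : fgen2 n a b * fgen2 n a c * fgen2 n b c *
      (fgen2 n b c * fgen2 n a c * fgen2 n a b)⁻¹ ∈ rels2 n :=
    Or.inr ⟨a, b, c, h1, h2, h3, h4, h5, h6, d1, d2, d3, rfl⟩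
  have h := mk_rel_one' hrel
  simp only [map_mul, map_inv, mk_fgen2] at h
  rwa [mul_inv_eq_one] at h

lemma rfun_sq (n m : ℕ) (a : TIdx (n + 1)) : rfun n m a * rfun n m a = 1 := by
  unfold rfun
  split_ifs <;> simp [ggen2_sq]

lemma rfun_cases (n m : ℕ) (a : TIdx (n + 1))
    (h : m = a.1.1 ∨ m = a.1.2.1 ∨ m = a.1.2.2) :
    ∃ p q : ℕ, rfun n m a = ggen2 n (del m p) (del m q) ∧
      (p = a.1.1 ∨ p = a.1.2.1 ∨ p = a.1.2.2) ∧ (q = a.1.1 ∨ q = a.1.2.1 ∨ q = a.1.2.2) ∧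
      p ≠ q ∧ p ≠ m ∧ q ≠ m ∧ 1 ≤ p ∧ p ≤ n + 1 ∧ 1 ≤ q ∧ q ≤ n + 1 := by
  obtain ⟨ha1, ha2, ha3, ha4⟩ := a.2
  rcases h with h | h | h
  · refine ⟨a.1.2.1, a.1.2.2, ?_, by tauto, by tauto, by omega, by omega, by omega,
      by omega, by omega, by omega, by omega⟩
    simp only [rfun, if_pos h]
  · refine ⟨a.1.1, a.1.2.2, ?_, by tauto, by tauto, by omega, by omega, by omega,
      by omega, by omega, by omega, by omega⟩
    simp only [rfun]
    rw [if_neg (by omega), if_pos h]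
  · refine ⟨a.1.1, a.1.2.1, ?_, by tauto, by tauto, by omega, by omega, by omega,
      by omega, by omega, by omega, by omega⟩
    simp only [rfun]
    rw [if_neg (by omega), if_neg (by omega), if_pos h]

lemma rfun_one (n m : ℕ) (a : TIdx (n + 1))
    (h : ¬(m = a.1.1 ∨ m = a.1.2.1 ∨ m = a.1.2.2)) : rfun n m a = 1 := by
  push_neg at h
  simp only [rfun]
  rw [if_neg h.1, if_neg h.2.1, if_neg h.2.2]

lemma rfun_comm (n m : ℕ) (hm1 : 1 ≤ m) (hm2 : m ≤ n + 1) (a b : TIdx (n + 1))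
    (hcard : (tripSet a ∩ tripSet b).card < 2) :
    rfun n m a * rfun n m b = rfun n m b * rfun n m a := by
  by_cases hma : m = a.1.1 ∨ m = a.1.2.1 ∨ m = a.1.2.2
  · by_cases hmb : m = b.1.1 ∨ m = b.1.2.1 ∨ m = b.1.2.2
    · have key : ∀ x, (x = a.1.1 ∨ x = a.1.2.1 ∨ x = a.1.2.2) →
          (x = b.1.1 ∨ x = b.1.2.1 ∨ x = b.1.2.2) → x = m := by
        intro x hx1 hx2
        have hxa : x ∈ tripSet a := by
          rcases hx1 with h | h | h <;> rw [h] <;> simp [tripSet]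
        have hxb : x ∈ tripSet b := by
          rcases hx2 with h | h | h <;> rw [h] <;> simp [tripSet]
        have hma' : m ∈ tripSet a := by
          rcases hma with h | h | h <;> rw [h] <;> simp [tripSet]
        have hmb' : m ∈ tripSet b := by
          rcases hmb with h | h | h <;> rw [h] <;> simp [tripSet]
        exact Finset.card_le_one.mp (Nat.lt_succ_iff.mp hcard) x
          (Finset.mem_inter.mpr ⟨hxa, hxb⟩) m (Finset.mem_inter.mpr ⟨hma', hmb'⟩)
      obtain ⟨p, q, hpq, hp, hq, hpq', hpm, hqm, hp1, hp2, hq1, hq2⟩ := rfun_cases n m a hma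
      obtain ⟨s, t, hst, hs, ht, hst', hsm, htm, hs1, hs2, ht1, ht2⟩ := rfun_cases n m b hmb
      have hps : p ≠ s := fun e => hpm (key p hp (e ▸ hs))
      have hpt : p ≠ t := fun e => hpm (key p hp (e ▸ ht))
      have hqs : q ≠ s := fun e => hqm (key q hq (e ▸ hs))
      have hqt : q ≠ t := fun e => hqm (key q hq (e ▸ ht))
      rw [hpq, hst]
      exact ggen2_comm n (del m p) (del m q) (del m s) (del m t)
        (by simp only [del]; split_ifs <;> omega) (by simp only [del]; split_ifs <;> omega)
        (by simp only [del]; split_ifs <;> omega) (by simp only [del]; split_ifs <;> omega)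
        (by simp only [del]; split_ifs <;> omega) (by simp only [del]; split_ifs <;> omega)
        (by simp only [del]; split_ifs <;> omega) (by simp only [del]; split_ifs <;> omega)
        (by simp only [del]; split_ifs <;> omega) (by simp only [del]; split_ifs <;> omega)
        (by simp only [del]; split_ifs <;> omega) (by simp only [del]; split_ifs <;> omega)
        (by simp only [del]; split_ifs <;> omega) (by simp only [del]; split_ifs <;> omega)
    · rw [rfun_one n m b hmb]
      simp
  · rw [rfun_one n m a hma]
    simp

lemma lift_core (n m x y z a b c : ℕ) (hs : sort3 a b c = (x, y, z))
    (hx : 1 ≤ x) (hxy : x < y) (hyz : y < z) (hz : z ≤ n + 1) :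
    FreeGroup.lift (rfun n m) (fgen3 (n + 1) a b c) =
      if m = x then ggen2 n (del m y) (del m z)
      else if m = y then ggen2 n (del m x) (del m z)
      else if m = z then ggen2 n (del m x) (del m y)
      else 1 := by
  unfold fgen3
  rw [hs, dif_pos ⟨hx, hxy, hyz, hz⟩, FreeGroup.lift_apply_of]
  rfl

lemma lift_fgen3 (n m a b c : ℕ) (ha : 1 ≤ a) (ha' : a ≤ n + 1) (hb : 1 ≤ b) (hb' : b ≤ n + 1)
    (hc : 1 ≤ c) (hc' : c ≤ n + 1) (hab : a ≠ b) (hac : a ≠ c) (hbc : b ≠ c) :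
    FreeGroup.lift (rfun n m) (fgen3 (n + 1) a b c) =
      if m = a then ggen2 n (del m b) (del m c)
      else if m = b then ggen2 n (del m a) (del m c)
      else if m = c then ggen2 n (del m a) (del m b)
      else 1 := by
  obtain h1 | h1 := lt_or_gt_of_ne hab <;> obtain h2 | h2 := lt_or_gt_of_ne hac <;>
      obtain h3 | h3 := lt_or_gt_of_ne hbc
  · rw [lift_core n m a b c a b c (by simp only [sort3, Prod.mk.injEq]; omega)
        (by omega) (by omega) (by omega) (by omega)]
  · rw [lift_core n m a c b a b c (by simp only [sort3, Prod.mk.injEq]; omega)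
        (by omega) (by omega) (by omega) (by omega)]
    split_ifs <;> first | rfl | omega | exact ggen2_symm _ _ _ | exact (ggen2_symm _ _ _).symm
  · omega
  · rw [lift_core n m c a b a b c (by simp only [sort3, Prod.mk.injEq]; omega)
        (by omega) (by omega) (by omega) (by omega)]
    split_ifs <;> first | rfl | omega | exact ggen2_symm _ _ _ | exact (ggen2_symm _ _ _).symm
  · rw [lift_core n m b a c a b c (by simp only [sort3, Prod.mk.injEq]; omega)
        (by omega) (by omega) (by omega) (by omega)]
    split_ifs <;> first | rfl | omega | exact ggen2_symm _ _ _ | exact (ggen2_symm _ _ _).symm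
  · omega
  · rw [lift_core n m b c a a b c (by simp only [sort3, Prod.mk.injEq]; omega)
        (by omega) (by omega) (by omega) (by omega)]
    split_ifs <;> first | rfl | omega | exact ggen2_symm _ _ _ | exact (ggen2_symm _ _ _).symm
  · rw [lift_core n m c b a a b c (by simp only [sort3, Prod.mk.injEq]; omega)
        (by omega) (by omega) (by omega) (by omega)]
    split_ifs <;> first | rfl | omega | exact ggen2_symm _ _ _ | exact (ggen2_symm _ _ _).symm

theorem statement_14 (n m : ℕ) (hn : 3 ≤ n) (hm1 : 1 ≤ m) (hm2 : m ≤ n + 1) :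
    (∀ r ∈ rels3 (n + 1), FreeGroup.lift (rfun n m) r = 1) ∧
    (∃ rm : G3 (n + 1) →* G2 n, ∀ a : TIdx (n + 1),
        rm (PresentedGroup.of a) = rfun n m a) := by
  have key : ∀ r ∈ rels3 (n + 1), FreeGroup.lift (rfun n m) r = 1 := by
    intro r hr
    rcases hr with (hr | hr) | hr
    · obtain ⟨a, rfl⟩ := hr
      simp only [map_mul, FreeGroup.lift_apply_of]
      exact rfun_sq n m a
    · obtain ⟨a, b, hcard, rfl⟩ := hr
      simp only [map_mul, map_inv, FreeGroup.lift_apply_of]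
      rw [rfun_comm n m hm1 hm2 a b hcard]
      group
    · obtain ⟨i, j, k, l, hi1, hi2, hj1, hj2, hk1, hk2, hl1, hl2,
        hij, hik, hil, hjk, hjl, hkl, rfl⟩ := hr
      simp only [map_mul, map_inv]
      rw [lift_fgen3 n m i j k hi1 hi2 hj1 hj2 hk1 hk2 hij hik hjk,
        lift_fgen3 n m i j l hi1 hi2 hj1 hj2 hl1 hl2 hij hil hjl,
        lift_fgen3 n m i k l hi1 hi2 hk1 hk2 hl1 hl2 hik hil hkl,
        lift_fgen3 n m j k l hj1 hj2 hk1 hk2 hl1 hl2 hjk hjl hkl]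
      split_ifs <;> first
        | omega
        | (simp only [one_mul, mul_one]
           rw [mul_inv_eq_one]
           apply ggen2_Y <;> (simp only [del]; split_ifs <;> omega))
        | simp
  exact ⟨key, PresentedGroup.toGroup key, fun a => PresentedGroup.toGroup.of key⟩

end GnkBrunnian
end

section
/- In the group G_5^3, the word β = a_{124}a_{123}a_{135}a_{134}a_{124}a_{134}a_{135}a_{123}a_{134}a_{135}a_{134}a_{123}a_{135}a_{134}a_{124}a_{134}a_{135}a_{123}a_{124}a_{134}a_{135}a_{134} represents a nontrivial element, i.e., β ≠ 1 in G_5^3. -/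
namespace GnkBrunnian

/-- Build an involutive permutation of `Fin 16` from a self-inverse table. -/
def mkP (t : Fin 16 → Fin 16) (h : ∀ x, t (t x) = x) : Equiv.Perm (Fin 16) :=
  ⟨t, t, h, h⟩

def g123 : Equiv.Perm (Fin 16) := mkP ![0,13,6,11,4,9,2,15,8,5,14,3,12,1,10,7] (by decide)

def g124 : Equiv.Perm (Fin 16) := mkP ![0,15,10,5,12,3,6,9,8,7,2,13,4,11,14,1] (by decide)

def g125 : Equiv.Perm (Fin 16) := mkP ![0,7,10,13,12,11,6,1,8,15,2,5,4,3,14,9] (by decide)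

def g134 : Equiv.Perm (Fin 16) := mkP ![0,1,10,11,12,13,6,7,8,9,2,3,4,5,14,15] (by decide)

def g135 : Equiv.Perm (Fin 16) := mkP ![0,1,10,11,12,13,6,7,8,9,2,3,4,5,14,15] (by decide)

def g145 : Equiv.Perm (Fin 16) := mkP ![0,13,2,15,4,9,6,11,8,5,10,7,12,1,14,3] (by decide)

def g234 : Equiv.Perm (Fin 16) := mkP ![0,15,2,13,4,11,6,9,8,7,10,5,12,3,14,1] (by decide)

def g235 : Equiv.Perm (Fin 16) := mkP ![0,7,2,5,4,3,6,1,8,15,10,13,12,11,14,9] (by decide)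

def g245 : Equiv.Perm (Fin 16) := mkP ![0,9,2,11,4,13,6,15,8,1,10,3,12,5,14,7] (by decide)

def g345 : Equiv.Perm (Fin 16) := mkP ![0,5,10,15,4,1,14,11,8,13,2,7,12,9,6,3] (by decide)

def fT : ℕ × ℕ × ℕ → Equiv.Perm (Fin 16)
  | (1,2,3) => g123
  | (1,2,4) => g124
  | (1,2,5) => g125
  | (1,3,4) => g134
  | (1,3,5) => g135
  | (1,4,5) => g145
  | (2,3,4) => g234
  | (2,3,5) => g235
  | (2,4,5) => g245
  | (3,4,5) => g345
  | _ => 1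

def fGen : TIdx 5 → Equiv.Perm (Fin 16) := fun t => fT t.1


lemma lift_fgen3_s15 (a b c : ℕ) :
    FreeGroup.lift fGen (fgen3 5 a b c) =
      if h : T3ok 5 (sort3 a b c) then fT (sort3 a b c) else 1 := by
  unfold fgen3
  split
  · simp [fGen]
  · simp

lemma hrels : ∀ r ∈ rels3 5, FreeGroup.lift fGen r = 1 := by
  rintro r ((⟨a, rfl⟩ | ⟨a, b, hab, rfl⟩) | ⟨i, j, k, l, hi1, hin, hj1, hjn, hk1, hkn, hl1, hln,
    hij, hik, hil, hjk, hjl, hkl, rfl⟩)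
  · obtain ⟨⟨i, j, k⟩, h1, h2, h3, h4⟩ := a
    simp only [map_mul, FreeGroup.lift_apply_of, fGen]
    have e1 : 1 ≤ i := h1
    have e2 : i < j := h2
    have e3 : j < k := h3
    have e4 : k ≤ 5 := h4
    have hi : i ≤ 3 := by omega
    have hj : j ≤ 4 := by omega
    interval_cases i <;> interval_cases j <;> interval_cases k <;> decide
  · obtain ⟨⟨i, j, k⟩, h1, h2, h3, h4⟩ := a
    obtain ⟨⟨s, t, u⟩, g1, g2, g3, g4⟩ := b
    simp only [tripSet] at hab
    simp only [map_mul, map_inv, FreeGroup.lift_apply_of, fGen]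
    have e1 : 1 ≤ i := h1
    have e2 : i < j := h2
    have e3 : j < k := h3
    have e4 : k ≤ 5 := h4
    have e5 : 1 ≤ s := g1
    have e6 : s < t := g2
    have e7 : t < u := g3
    have e8 : u ≤ 5 := g4
    have hi : i ≤ 3 := by omega
    have hj : j ≤ 4 := by omega
    have hs : s ≤ 3 := by omega
    have ht : t ≤ 4 := by omega
    interval_cases i <;> interval_cases j <;> interval_cases k <;>
      interval_cases s <;> interval_cases t <;> interval_cases u <;>
      revert hab <;> decide
  · simp only [map_mul, map_inv, lift_fgen3_s15]
    interval_cases i <;> interval_cases j <;> interval_cases k <;> interval_cases l <;>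
      first | omega | decide

def φMN : G3 5 →* Equiv.Perm (Fin 16) := PresentedGroup.toGroup hrels

lemma phi_ggen3 (a b c : ℕ) :
    φMN (ggen3 5 a b c) =
      if h : T3ok 5 (sort3 a b c) then fT (sort3 a b c) else 1 := by
  unfold ggen3
  split
  · exact PresentedGroup.toGroup.of _
  · simp

theorem statement_15 :
    (([(1,2,4),(1,2,3),(1,3,5),(1,3,4),(1,2,4),(1,3,4),(1,3,5),(1,2,3),(1,3,4),(1,3,5),
       (1,3,4),(1,2,3),(1,3,5),(1,3,4),(1,2,4),(1,3,4),(1,3,5),(1,2,3),(1,2,4),(1,3,4),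
       (1,3,5),(1,3,4)] : List (ℕ × ℕ × ℕ)).map
        fun t => ggen3 5 t.1 t.2.1 t.2.2).prod ≠ 1 := by
  intro h
  have h2 : φMN ((([(1,2,4),(1,2,3),(1,3,5),(1,3,4),(1,2,4),(1,3,4),(1,3,5),(1,2,3),(1,3,4),(1,3,5),
       (1,3,4),(1,2,3),(1,3,5),(1,3,4),(1,2,4),(1,3,4),(1,3,5),(1,2,3),(1,2,4),(1,3,4),
       (1,3,5),(1,3,4)] : List (ℕ × ℕ × ℕ)).map
        fun t => ggen3 5 t.1 t.2.1 t.2.2).prod) = 1 := by rw [h, map_one]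
  rw [map_list_prod, List.map_map] at h2
  simp only [Function.comp_def, phi_ggen3] at h2
  revert h2
  decide

end GnkBrunnian
end
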